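/- arXiv:1710.10543 — 4 statements merged into one kernel-verified Lean document; each statement's English description precedes it below -/
import Mathlib

section
/- Consistency (Galerkin orthogonality) of the dG(q) method (Lemma 2.1): let f : J → V* (the continuous dual of V) be such that t ↦ f(t)(v_τ(t)) is integrable on J for every v_τ ∈ S_τ, and let u₀ ∈ H. Suppose u ∈ C¹([0,T]; V) satisfies u(0) = u₀ (as elements of H) and (u'(t), v)_H + a(t; u(t), v) = f(t)(v) for all v ∈ V and a.e. t ∈ J, and suppose u_τ ∈ S_τ satisfies B_τ(u_τ, v_τ) = Σ_{n=0}^{N−1} ∫_{J_n} f(t)(v_τ(t)) dt + (u₀, v_τ^{0,+})_H for all v_τ ∈ S_τ. Then B_τ(u − u_τ, v_τ) = 0 for all v_τ ∈ S_τ. -/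
open MeasureTheory Filter

noncomputable section

universe u w

variable {V : Type u} [NormedAddCommGroup V] [InnerProductSpace ℝ V]
variable {H : Type w} [NormedAddCommGroup H] [InnerProductSpace ℝ H]

/-- The norm `‖v‖_{V'} = sup {(v,φ)_H/‖φ‖_V : φ ∈ V, φ ≠ 0}`. -/
def dualNorm (ι : V →L[ℝ] H) (w : V) : ℝ :=
  sSup ((fun φ : V => (inner ℝ (ι w) (ι φ) : ℝ) / ‖φ‖) '' {φ : V | φ ≠ 0})

/-- Right limit `v^{n,+}` of a function at a point. -/
def rlim (w : ℝ → V) (x : ℝ) : V :=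
  letI : Nonempty V := ⟨0⟩
  limUnder (nhdsWithin x (Set.Ioi x)) w

/-- Membership in `S_τ`: `w` coincides on each `J_n = (t_n, t_{n+1}]` with a `V`-valued
polynomial of degree ≤ q. -/
def MemS (N q : ℕ) (t : ℕ → ℝ) (w : ℝ → V) : Prop :=
  ∀ n < N, ∃ c : Fin (q + 1) → V,
    ∀ x ∈ Set.Ioc (t n) (t (n + 1)), w x = ∑ j : Fin (q + 1), x ^ (j : ℕ) • c j

/-- The DG bilinear form `B_τ`. -/
def dgB (ι : V →L[ℝ] H) (N : ℕ) (t : ℕ → ℝ) (a : ℝ → V →ₗ[ℝ] V →ₗ[ℝ] ℝ)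
    (w v : ℝ → V) : ℝ :=
  (∑ n ∈ Finset.range N, ∫ s in Set.Ioc (t n) (t (n + 1)),
      ((inner ℝ (ι (deriv w s)) (ι (v s)) : ℝ) + a s (w s) (v s)))
    + (inner ℝ (ι (rlim w (t 0))) (ι (rlim v (t 0))) : ℝ)
    + ∑ n ∈ Finset.Ico 1 N, (inner ℝ (ι (rlim w (t n) - w (t n))) (ι (rlim v (t n))) : ℝ)

/-- `‖v‖_{X,τ}`. -/
def dgNormX (ι : V →L[ℝ] H) (N : ℕ) (t : ℕ → ℝ) (v : ℝ → V) : ℝ :=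
  Real.sqrt ((∑ n ∈ Finset.range N, ∫ s in Set.Ioc (t n) (t (n + 1)),
      (dualNorm ι (deriv v s) ^ 2 + ‖v s‖ ^ 2))
    + ‖ι (rlim v (t 0))‖ ^ 2
    + ∑ n ∈ Finset.Ico 1 N, ‖ι (rlim v (t n) - v (t n))‖ ^ 2)

/-- `‖v‖_{X,τ,*}` (jump weights `τ_n⁻¹`). -/
def dgNormXs (ι : V →L[ℝ] H) (N : ℕ) (t : ℕ → ℝ) (v : ℝ → V) : ℝ :=
  Real.sqrt ((∑ n ∈ Finset.range N, ∫ s in Set.Ioc (t n) (t (n + 1)),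
      (dualNorm ι (deriv v s) ^ 2 + ‖v s‖ ^ 2))
    + ‖ι (rlim v (t 0))‖ ^ 2
    + ∑ n ∈ Finset.Ico 1 N, (t (n + 1) - t n)⁻¹ * ‖ι (rlim v (t n) - v (t n))‖ ^ 2)

/-- `‖v‖_{X*,τ}` (with `‖v^N‖` in place of `‖v^{0,+}‖`). -/
def dgNormXd (ι : V →L[ℝ] H) (N : ℕ) (t : ℕ → ℝ) (v : ℝ → V) : ℝ :=
  Real.sqrt ((∑ n ∈ Finset.range N, ∫ s in Set.Ioc (t n) (t (n + 1)),
      (dualNorm ι (deriv v s) ^ 2 + ‖v s‖ ^ 2))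
    + ‖ι (v (t N))‖ ^ 2
    + ∑ n ∈ Finset.Ico 1 N, ‖ι (rlim v (t n) - v (t n))‖ ^ 2)

/-- `‖v‖_{Y,τ}`. -/
def dgNormY (ι : V →L[ℝ] H) (N : ℕ) (t : ℕ → ℝ) (v : ℝ → V) : ℝ :=
  Real.sqrt ((∑ n ∈ Finset.range N, ∫ s in Set.Ioc (t n) (t (n + 1)), ‖v s‖ ^ 2)
    + ‖ι (rlim v (t 0))‖ ^ 2
    + ∑ n ∈ Finset.Ico 1 N, ‖ι (rlim v (t n))‖ ^ 2)

/-- `‖v‖_{Y,τ,#}` (weights `τ_n`). -/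
def dgNormYs (ι : V →L[ℝ] H) (N : ℕ) (t : ℕ → ℝ) (v : ℝ → V) : ℝ :=
  Real.sqrt ((∑ n ∈ Finset.range N, ∫ s in Set.Ioc (t n) (t (n + 1)), ‖v s‖ ^ 2)
    + ‖ι (rlim v (t 0))‖ ^ 2
    + ∑ n ∈ Finset.Ico 1 N, (t (n + 1) - t n) * ‖ι (rlim v (t n))‖ ^ 2)

/-- `‖v‖_{Y*,τ}`. -/
def dgNormYd (ι : V →L[ℝ] H) (N : ℕ) (t : ℕ → ℝ) (v : ℝ → V) : ℝ :=
  Real.sqrt ((∑ n ∈ Finset.range N, ∫ s in Set.Ioc (t n) (t (n + 1)), ‖v s‖ ^ 2)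
    + ‖ι (v (t N))‖ ^ 2
    + ∑ n ∈ Finset.Ico 1 N, ‖ι (rlim v (t n))‖ ^ 2)

/-- `‖v‖_{Y*,τ,#}`. -/
def dgNormYds (ι : V →L[ℝ] H) (N : ℕ) (t : ℕ → ℝ) (v : ℝ → V) : ℝ :=
  Real.sqrt ((∑ n ∈ Finset.range N, ∫ s in Set.Ioc (t n) (t (n + 1)), ‖v s‖ ^ 2)
    + ‖ι (v (t N))‖ ^ 2
    + ∑ n ∈ Finset.Ico 1 N, (t (n + 1) - t n) * ‖ι (rlim v (t n))‖ ^ 2)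

end

open MeasureTheory Filter in
private lemma dg_poly_contDiff {V : Type*} [NormedAddCommGroup V] [NormedSpace ℝ V]
    (m : ℕ) (c : Fin m → V) :
    ContDiff ℝ ⊤ (fun x : ℝ => ∑ j : Fin m, x ^ (j : ℕ) • c j) :=
  ContDiff.sum fun _ _ => (contDiff_id.pow _).smul contDiff_const

open MeasureTheory Filter in
private lemma dg_rlim_eq {V : Type u} [NormedAddCommGroup V] [InnerProductSpace ℝ V]
    {w : ℝ → V} {x : ℝ} {L : V} (h : Filter.Tendsto w (nhdsWithin x (Set.Ioi x)) (nhds L)) :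
    rlim w x = L :=
  h.limUnder_eq

open MeasureTheory Filter in
private lemma dg_meas_bil {V : Type*} [NormedAddCommGroup V] [InnerProductSpace ℝ V]
    (a : ℝ → V →ₗ[ℝ] V →ₗ[ℝ] ℝ) (hmeas : ∀ w₀ v₀ : V, Measurable fun s => a s w₀ v₀)
    (m : ℕ) (c d : Fin m → V) :
    Measurable fun s : ℝ =>
      a s (∑ j : Fin m, s ^ (j : ℕ) • c j) (∑ k : Fin m, s ^ (k : ℕ) • d k) := by
  have h : (fun s : ℝ => a s (∑ j : Fin m, s ^ (j : ℕ) • c j) (∑ k : Fin m, s ^ (k : ℕ) • d k))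
      = fun s : ℝ => ∑ j : Fin m, ∑ k : Fin m, s ^ (j : ℕ) * (s ^ (k : ℕ) * a s (c j) (d k)) := by
    funext s
    simp only [map_sum, LinearMap.sum_apply, LinearMap.map_smul, LinearMap.smul_apply,
      smul_eq_mul, Finset.mul_sum]
    rw [Finset.sum_comm]
  rw [h]
  exact Finset.measurable_sum _ fun j _ => Finset.measurable_sum _ fun k _ =>
    (measurable_id.pow_const _).mul ((measurable_id.pow_const _).mul (hmeas _ _))

/-- **Lemma 2.1 (consistency / Galerkin orthogonality of the dG(q) method).** -/
theorem dg_consistency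
    {V : Type u} [NormedAddCommGroup V] [InnerProductSpace ℝ V] [CompleteSpace V]
    {H : Type w} [NormedAddCommGroup H] [InnerProductSpace ℝ H] [CompleteSpace H]
    (ι : V →L[ℝ] H) (hinj : Function.Injective ι) (hdense : DenseRange ι)
    (T : ℝ) (hT : 0 < T) (N : ℕ) (hN : 1 ≤ N)
    (t : ℕ → ℝ) (ht0 : t 0 = 0) (htN : t N = T)
    (hmono : ∀ n < N, t n < t (n + 1)) (hτ : ∀ n < N, t (n + 1) - t n ≤ 1)
    (q : ℕ) (M α : ℝ) (hα : 0 < α) (hαM : α ≤ M)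
    (a : ℝ → V →ₗ[ℝ] V →ₗ[ℝ] ℝ)
    (hmeas : ∀ w₀ v₀ : V, Measurable fun s => a s w₀ v₀)
    (hbnd : ∀ᵐ s ∂(volume.restrict (Set.Ioo (0 : ℝ) T)),
      (∀ w₀ v₀ : V, |a s w₀ v₀| ≤ M * ‖w₀‖ * ‖v₀‖) ∧
      (∀ v₀ : V, α * ‖v₀‖ ^ 2 ≤ a s v₀ v₀))
    (f : ℝ → (V →L[ℝ] ℝ))
    (hfint : ∀ vτ : ℝ → V, MemS N q t vτ →
      MeasureTheory.IntegrableOn (fun s => f s (vτ s)) (Set.Ioc (0 : ℝ) T))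
    (u₀ : H)
    -- `u` solves the evolution equation with data `f`, `u₀`
    (u : ℝ → V) (hu : ContDiffOn ℝ 1 u (Set.Icc 0 T)) (hu0 : ι (u 0) = u₀)
    (hueq : ∀ᵐ s ∂(volume.restrict (Set.Ioo (0 : ℝ) T)),
      ∀ v : V, (inner ℝ (ι (deriv u s)) (ι v) : ℝ) + a s (u s) v = f s v)
    -- `uτ` is a dG(q) solution
    (uτ : ℝ → V) (huτ : MemS N q t uτ)
    (huτeq : ∀ vτ : ℝ → V, MemS N q t vτ →
      dgB ι N t a uτ vτ =
        (∑ n ∈ Finset.range N, ∫ s in Set.Ioc (t n) (t (n + 1)), f s (vτ s))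
          + (inner ℝ u₀ (ι (rlim vτ (t 0))) : ℝ)) :
    ∀ vτ : ℝ → V, MemS N q t vτ → dgB ι N t a (fun s => u s - uτ s) vτ = 0 := by
  intro vτ hvτ
  -- monotonicity of the partition
  have hmono' : ∀ m n : ℕ, m ≤ n → n ≤ N → t m ≤ t n := by
    intro m n hmn hnN
    induction n with
    | zero => exact le_of_eq (by rw [Nat.le_zero.mp hmn])
    | succ k ih =>
      rcases Nat.lt_succ_iff_lt_or_eq.mp (Nat.lt_succ_of_le hmn) with h | h
      · exact le_trans (ih (Nat.lt_succ_iff.mp h) (le_trans (Nat.le_succ k) hnN))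
          (le_of_lt (hmono k (Nat.lt_of_succ_le hnN)))
      · exact le_of_eq (by rw [h])
  have ht0le : ∀ n, n ≤ N → 0 ≤ t n := fun n hn => ht0 ▸ hmono' 0 n (Nat.zero_le n) hn
  have htleT : ∀ n, n ≤ N → t n ≤ T := fun n hn => htN ▸ hmono' n N hn le_rfl
  have hud : ∀ s ∈ Set.Ioo (0:ℝ) T, DifferentiableAt ℝ u s := fun s hs =>
    (hu.differentiableOn one_ne_zero).differentiableAt (Icc_mem_nhds hs.1 hs.2)
  have hueq' := (ae_restrict_iff' measurableSet_Ioo).mp hueq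
  have hbnd' := (ae_restrict_iff' measurableSet_Ioo).mp hbnd
  have hres : ∀ n : ℕ, volume.restrict (Set.Ioc (t n) (t (n+1)))
      = volume.restrict (Set.Ioo (t n) (t (n+1))) := fun n =>
    (Measure.restrict_congr_set Ioo_ae_eq_Ioc).symm
  have hmemIoo : ∀ n : ℕ, ∀ᵐ s ∂(volume.restrict (Set.Ioc (t n) (t (n+1)))),
      s ∈ Set.Ioo (t n) (t (n+1)) := by
    intro n; rw [hres n]; exact ae_restrict_mem measurableSet_Ioo
  have hIoosub : ∀ n, n < N → Set.Ioo (t n) (t (n+1)) ⊆ Set.Ioo 0 T := by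
    intro n hn x hx
    exact ⟨lt_of_le_of_lt (ht0le n hn.le) hx.1, lt_of_lt_of_le hx.2 (htleT (n+1) hn)⟩
  -- right limits
  have htendu : ∀ n, n < N → Filter.Tendsto u (nhdsWithin (t n) (Set.Ioi (t n))) (nhds (u (t n))) := by
    intro n hn
    have h1 : t n < T := lt_of_lt_of_le (hmono n hn) (htleT (n+1) hn)
    have h2 : Set.Icc (0:ℝ) T ∈ nhdsWithin (t n) (Set.Ioi (t n)) :=
      Filter.mem_of_superset (Ioo_mem_nhdsGT_of_mem ⟨le_rfl, h1⟩)
        (fun x hx => ⟨le_trans (ht0le n hn.le) hx.1.le, hx.2.le⟩)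
    exact Filter.Tendsto.mono_left
      (hu.continuousOn (t n) ⟨ht0le n hn.le, htleT n hn.le⟩) (nhdsWithin_le_iff.mpr h2)
  have htendpoly : ∀ (w : ℝ → V), MemS N q t w → ∀ n, n < N →
      Filter.Tendsto w (nhdsWithin (t n) (Set.Ioi (t n))) (nhds (rlim w (t n))) := by
    intro w hw n hn
    obtain ⟨c, hc⟩ := hw n hn
    have h1 : w =ᶠ[nhdsWithin (t n) (Set.Ioi (t n))]
        (fun x => ∑ j : Fin (q+1), x ^ (j : ℕ) • c j) :=
      Filter.eventuallyEq_of_mem (Ioc_mem_nhdsGT_of_mem ⟨le_rfl, hmono n hn⟩) hc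
    have h2 : Filter.Tendsto w (nhdsWithin (t n) (Set.Ioi (t n)))
        (nhds (∑ j : Fin (q+1), (t n) ^ (j : ℕ) • c j)) :=
      (((dg_poly_contDiff (q+1) c).continuous.tendsto (t n)).mono_left
        nhdsWithin_le_nhds).congr' h1.symm
    rwa [dg_rlim_eq h2]
  have htenduτ := htendpoly uτ huτ
  have hrlimsub : ∀ n, n < N →
      rlim (fun s => u s - uτ s) (t n) = u (t n) - rlim uτ (t n) := fun n hn =>
    dg_rlim_eq ((htendu n hn).sub (htenduτ n hn))
  -- the jump terms
  have hjump : ∀ n ∈ Finset.Ico 1 N,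
      (inner ℝ (ι (rlim (fun s => u s - uτ s) (t n) - (u (t n) - uτ (t n)))) (ι (rlim vτ (t n))) : ℝ)
      = - (inner ℝ (ι (rlim uτ (t n) - uτ (t n))) (ι (rlim vτ (t n))) : ℝ) := by
    intro n hn
    rw [Finset.mem_Ico] at hn
    rw [hrlimsub n hn.2]
    have h1 : u (t n) - rlim uτ (t n) - (u (t n) - uτ (t n)) = -(rlim uτ (t n) - uτ (t n)) := by
      abel
    rw [h1, map_neg, inner_neg_left]
  -- the initial term
  have hpart0 : (inner ℝ (ι (rlim (fun s => u s - uτ s) (t 0))) (ι (rlim vτ (t 0))) : ℝ)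
      = (inner ℝ u₀ (ι (rlim vτ (t 0))) : ℝ)
        - (inner ℝ (ι (rlim uτ (t 0))) (ι (rlim vτ (t 0))) : ℝ) := by
    rw [hrlimsub 0 hN, map_sub, inner_sub_left, ht0, hu0]
  -- the key integral identity on each subinterval
  have key : ∀ n ∈ Finset.range N,
      (∫ s in Set.Ioc (t n) (t (n+1)),
        ((inner ℝ (ι (deriv (fun s => u s - uτ s) s)) (ι (vτ s)) : ℝ)
          + a s (u s - uτ s) (vτ s)))
      = (∫ s in Set.Ioc (t n) (t (n+1)), f s (vτ s))
        - ∫ s in Set.Ioc (t n) (t (n+1)),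
            ((inner ℝ (ι (deriv uτ s)) (ι (vτ s)) : ℝ) + a s (uτ s) (vτ s)) := by
    intro n hn
    rw [Finset.mem_range] at hn
    obtain ⟨cP, hcP⟩ := huτ n hn
    obtain ⟨cQ, hcQ⟩ := hvτ n hn
    set P : ℝ → V := fun x => ∑ j : Fin (q+1), x ^ (j : ℕ) • cP j with hPdef
    set Q : ℝ → V := fun x => ∑ j : Fin (q+1), x ^ (j : ℕ) • cQ j with hQdef
    have hPc : ContDiff ℝ ⊤ P := dg_poly_contDiff (q+1) cP
    have hQc : ContDiff ℝ ⊤ Q := dg_poly_contDiff (q+1) cQ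
    -- integrability of the G-part
    have hGcont1 : Continuous fun s => (inner ℝ (ι (deriv P s)) (ι (Q s)) : ℝ) :=
      Continuous.inner (ι.continuous.comp (hPc.continuous_deriv le_top))
        (ι.continuous.comp hQc.continuous)
    have hGmeas2 : Measurable fun s => a s (P s) (Q s) := dg_meas_bil a hmeas (q+1) cP cQ
    obtain ⟨KP, hKP⟩ := (isCompact_Icc (a := t n) (b := t (n+1))).exists_bound_of_continuousOn
      hPc.continuous.continuousOn
    obtain ⟨KQ, hKQ⟩ := (isCompact_Icc (a := t n) (b := t (n+1))).exists_bound_of_continuousOn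
      hQc.continuous.continuousOn
    have hKP0 : 0 ≤ KP := le_trans (norm_nonneg _)
      (hKP (t n) (Set.left_mem_Icc.mpr (hmono n hn).le))
    have hM0 : 0 ≤ M := le_trans hα.le hαM
    have hbndJ : ∀ᵐ s ∂(volume.restrict (Set.Ioc (t n) (t (n+1)))),
        |a s (P s) (Q s)| ≤ M * KP * KQ := by
      filter_upwards [hmemIoo n, ae_restrict_of_ae hbnd'] with s hs hb
      have hb' := (hb (hIoosub n hn hs)).1 (P s) (Q s)
      have h1 : ‖P s‖ ≤ KP := hKP s (Set.Ioo_subset_Icc_self hs)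
      have h2 : ‖Q s‖ ≤ KQ := hKQ s (Set.Ioo_subset_Icc_self hs)
      calc |a s (P s) (Q s)| ≤ M * ‖P s‖ * ‖Q s‖ := hb'
        _ ≤ M * KP * KQ :=
            mul_le_mul (mul_le_mul_of_nonneg_left h1 hM0) h2 (norm_nonneg _)
              (mul_nonneg hM0 hKP0)
    have hGint : IntegrableOn
        (fun s => (inner ℝ (ι (deriv P s)) (ι (Q s)) : ℝ) + a s (P s) (Q s))
        (Set.Ioc (t n) (t (n+1))) := by
      refine hGcont1.integrableOn_Ioc.add ?_
      refine Integrable.mono' (g := fun _ => M * KP * KQ)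
        ((integrableOn_const_iff).mpr (Or.inr measure_Ioc_lt_top))
        hGmeas2.aestronglyMeasurable ?_
      simpa [Real.norm_eq_abs] using hbndJ
    have haeuτ : ∀ᵐ s ∂(volume.restrict (Set.Ioc (t n) (t (n+1)))),
        ((inner ℝ (ι (deriv uτ s)) (ι (vτ s)) : ℝ) + a s (uτ s) (vτ s))
          = ((inner ℝ (ι (deriv P s)) (ι (Q s)) : ℝ) + a s (P s) (Q s)) := by
      filter_upwards [hmemIoo n] with s hs
      have h1 : uτ s = P s := hcP s (Set.Ioo_subset_Ioc_self hs)
      have h2 : vτ s = Q s := hcQ s (Set.Ioo_subset_Ioc_self hs)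
      have h3 : deriv uτ s = deriv P s :=
        Filter.EventuallyEq.deriv_eq (Filter.eventuallyEq_of_mem
          (isOpen_Ioo.mem_nhds hs) (fun x hx => hcP x (Set.Ioo_subset_Ioc_self hx)))
      rw [h1, h2, h3]
    have huτint : IntegrableOn
        (fun s => (inner ℝ (ι (deriv uτ s)) (ι (vτ s)) : ℝ) + a s (uτ s) (vτ s))
        (Set.Ioc (t n) (t (n+1))) := hGint.congr (Filter.EventuallyEq.symm haeuτ)
    have hFint : IntegrableOn (fun s => f s (vτ s)) (Set.Ioc (t n) (t (n+1))) :=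
      (hfint vτ hvτ).mono_set (fun x hx =>
        ⟨lt_of_le_of_lt (ht0le n hn.le) hx.1, le_trans hx.2 (htleT (n+1) hn)⟩)
    have haesub : ∀ᵐ s ∂(volume.restrict (Set.Ioc (t n) (t (n+1)))),
        ((inner ℝ (ι (deriv (fun s => u s - uτ s) s)) (ι (vτ s)) : ℝ)
          + a s (u s - uτ s) (vτ s))
        = f s (vτ s)
          - ((inner ℝ (ι (deriv uτ s)) (ι (vτ s)) : ℝ) + a s (uτ s) (vτ s)) := by
      filter_upwards [hmemIoo n, ae_restrict_of_ae hueq'] with s hs heq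
      have hsIoo : s ∈ Set.Ioo (0:ℝ) T := hIoosub n hn hs
      have hud' : DifferentiableAt ℝ u s := hud s hsIoo
      have hPev : uτ =ᶠ[nhds s] P := Filter.eventuallyEq_of_mem
        (isOpen_Ioo.mem_nhds hs) (fun x hx => hcP x (Set.Ioo_subset_Ioc_self hx))
      have huτd : DifferentiableAt ℝ uτ s :=
        (Filter.EventuallyEq.differentiableAt_iff hPev).mpr
          ((hPc.differentiable (by simp)).differentiableAt)
      have hder : deriv (fun s => u s - uτ s) s = deriv u s - deriv uτ s :=
        deriv_sub hud' huτd
      have h4 : a s (u s - uτ s) (vτ s) = a s (u s) (vτ s) - a s (uτ s) (vτ s) := by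
        rw [map_sub, LinearMap.sub_apply]
      have h5 := heq hsIoo (vτ s)
      rw [hder, map_sub, inner_sub_left, h4]
      linarith
    rw [integral_congr_ae haesub, integral_sub hFint huτint]
  -- assemble
  have huτB := huτeq vτ hvτ
  unfold dgB at huτB ⊢
  rw [Finset.sum_congr rfl key, Finset.sum_sub_distrib, hpart0,
    Finset.sum_congr rfl hjump, Finset.sum_neg_distrib]
  linarith
end

section
/- L² stability of the projection π_n (Lemma 3.1, estimate (3.2b)): there exists a constant C_q > 0 depending only on q (independent of V, H, n and τ_n) such that ‖π_n v‖_{L²(J_n;U)} ≤ C_q ‖v‖_{L²(J_n;U)} for every v ∈ L²(J_n; V), both for U = V and for U = H. -/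
open MeasureTheory
open scoped ENNReal NNReal

noncomputable def Mmat (q : ℕ) : Matrix (Fin q) (Fin q) ℝ :=
  Matrix.of fun l j => (((l : ℕ) : ℝ) + ((j : ℕ) : ℝ) + 2)⁻¹

set_option maxHeartbeats 1000000 in
lemma Mmat_mulVec_eq_zero {q : ℕ} {b : Fin q → ℝ} (h : (Mmat q).mulVec b = 0) : b = 0 := by
  set Q : ℝ → ℝ := fun s => ∑ j : Fin q, b j * s ^ (j : ℕ) with hQdef
  have hQc : Continuous Q := by
    apply continuous_finset_sum
    intro j _
    exact continuous_const.mul (continuous_pow _)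
  have hint : ∀ n : ℕ, (∫ s in (0:ℝ)..1, s ^ n) = ((n : ℝ) + 1)⁻¹ := by
    intro n
    rw [integral_pow]
    norm_num
  have key : (∫ s in (0:ℝ)..1, s * Q s ^ 2) = 0 := by
    have hpt : ∀ s : ℝ, s * Q s ^ 2
        = ∑ l : Fin q, ∑ j : Fin q, (b l * b j) * s ^ ((l : ℕ) + (j : ℕ) + 1) := by
      intro s
      have hsq : Q s ^ 2 = ∑ l : Fin q, ∑ j : Fin q, (b l * s ^ (l : ℕ)) * (b j * s ^ (j : ℕ)) := by
        rw [sq, hQdef]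
        exact Finset.sum_mul_sum _ _ _ _
      rw [hsq]
      simp only [Finset.mul_sum]
      refine Finset.sum_congr rfl fun l _ => Finset.sum_congr rfl fun j _ => ?_
      ring
    have expand : (∫ s in (0:ℝ)..1, s * Q s ^ 2)
        = ∑ l : Fin q, b l * (((Mmat q).mulVec b) l) := by
      simp_rw [hpt]
      rw [intervalIntegral.integral_finset_sum
        (f := fun (l : Fin q) (s : ℝ) => ∑ j : Fin q, b l * b j * s ^ ((l : ℕ) + (j : ℕ) + 1))
        (fun l _ => ((continuous_finset_sum _ fun j _ =>
          continuous_const.mul (continuous_pow _)).intervalIntegrable _ _))]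
      refine Finset.sum_congr rfl fun l _ => ?_
      rw [intervalIntegral.integral_finset_sum
        (f := fun (j : Fin q) (s : ℝ) => b l * b j * s ^ ((l : ℕ) + (j : ℕ) + 1))
        (fun j _ => (continuous_const.mul (continuous_pow _)).intervalIntegrable _ _)]
      simp only [Matrix.mulVec, dotProduct, Finset.mul_sum]
      refine Finset.sum_congr rfl fun j _ => ?_
      rw [intervalIntegral.integral_const_mul, hint]
      simp only [Mmat, Matrix.of_apply]
      push_cast
      ring
    rw [expand, h]
    simp
  -- integrand vanishes a.e.
  have hf : Continuous fun s : ℝ => s * Q s ^ 2 := continuous_id.mul (hQc.pow 2)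
  have key' : (∫ s in Set.Ioc (0:ℝ) 1, s * Q s ^ 2) = 0 := by
    rw [← intervalIntegral.integral_of_le (by norm_num : (0:ℝ) ≤ 1)]
    exact key
  have hnn : 0 ≤ᵐ[volume.restrict (Set.Ioc (0:ℝ) 1)] fun s => s * Q s ^ 2 := by
    have : ∀ᵐ s ∂(volume.restrict (Set.Ioc (0:ℝ) 1)), 0 ≤ s * Q s ^ 2 :=
      (ae_restrict_iff' measurableSet_Ioc).2 (Filter.Eventually.of_forall
        fun s hs => mul_nonneg (le_of_lt hs.1) (sq_nonneg _))
    exact this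
  have hInt : IntegrableOn (fun s => s * Q s ^ 2) (Set.Ioc (0:ℝ) 1) volume :=
    hf.integrableOn_Ioc
  have hae : (fun s => s * Q s ^ 2) =ᵐ[volume.restrict (Set.Ioc (0:ℝ) 1)] 0 :=
    (integral_eq_zero_iff_of_nonneg_ae hnn hInt).mp key'
  have hroot : ∀ s ∈ Set.Ioo (0:ℝ) 1, Q s = 0 := by
    intro s hs
    by_contra hQs
    have hopen : IsOpen (Set.Ioo (0:ℝ) 1 ∩ {x | x * Q x ^ 2 ≠ 0}) :=
      isOpen_Ioo.inter (isOpen_ne_fun hf continuous_const)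
    have hmem : s ∈ Set.Ioo (0:ℝ) 1 ∩ {x | x * Q x ^ 2 ≠ 0} :=
      ⟨hs, mul_ne_zero (ne_of_gt hs.1) (pow_ne_zero _ hQs)⟩
    have hpos : 0 < volume (Set.Ioo (0:ℝ) 1 ∩ {x | x * Q x ^ 2 ≠ 0}) :=
      hopen.measure_pos volume ⟨s, hmem⟩
    have hnull : volume ({x | x * Q x ^ 2 ≠ 0} ∩ Set.Ioc (0:ℝ) 1) = 0 := by
      have := ae_iff.mp hae
      rwa [Measure.restrict_apply (by
        have : MeasurableSet {x : ℝ | x * Q x ^ 2 ≠ 0} :=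
          (isOpen_ne_fun hf continuous_const).measurableSet
        exact this)] at this
    have hsub : Set.Ioo (0:ℝ) 1 ∩ {x | x * Q x ^ 2 ≠ 0}
        ⊆ {x | x * Q x ^ 2 ≠ 0} ∩ Set.Ioc (0:ℝ) 1 := by
      rintro x ⟨hx1, hx2⟩
      exact ⟨hx2, Set.Ioo_subset_Ioc_self hx1⟩
    exact absurd (measure_mono_null hsub hnull) (ne_of_gt hpos)
  -- polynomial with infinitely many roots
  set P : Polynomial ℝ := ∑ j : Fin q, Polynomial.C (b j) * Polynomial.X ^ (j : ℕ) with hPdef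
  have hPeval : ∀ s : ℝ, P.eval s = Q s := by
    intro s
    rw [hPdef, hQdef]
    simp [Polynomial.eval_finset_sum]
  have hP0 : P = 0 := by
    apply Polynomial.eq_zero_of_infinite_isRoot
    refine (Set.Ioo_infinite (by norm_num : (0:ℝ) < 1)).mono fun s hs => ?_
    simp only [Set.mem_setOf_eq, Polynomial.IsRoot]
    rw [hPeval]
    exact hroot s hs
  funext j
  have hco := congrArg (fun r => Polynomial.coeff r (j : ℕ)) hP0
  simp only [hPdef, Polynomial.finset_sum_coeff, Polynomial.coeff_C_mul,
    Polynomial.coeff_X_pow, Polynomial.coeff_zero, mul_ite, mul_one, mul_zero] at hco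
  rw [Finset.sum_eq_single j] at hco
  · simpa using hco
  · intro k _ hkj
    rw [if_neg]
    exact fun hh => hkj (Fin.ext hh.symm)
  · simp

lemma Mmat_det_ne_zero (q : ℕ) : (Mmat q).det ≠ 0 := by
  intro hdet
  obtain ⟨v, hv0, hv⟩ := Matrix.exists_mulVec_eq_zero_iff.mpr hdet
  exact hv0 (Mmat_mulVec_eq_zero hv)

noncomputable def Nmat (q : ℕ) : Matrix (Fin q) (Fin q) ℝ := (Mmat q)⁻¹

lemma Nmat_mul (q : ℕ) : Nmat q * Mmat q = 1 :=
  Matrix.nonsing_inv_mul _ (isUnit_iff_ne_zero.mpr (Mmat_det_ne_zero q))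

noncomputable def Cq (q : ℕ) : ℝ := (∑ k : Fin q, ∑ l : Fin q, |Nmat q k l|) + 1

lemma Cq_pos (q : ℕ) : 0 < Cq q := by
  have : 0 ≤ ∑ k : Fin q, ∑ l : Fin q, |Nmat q k l| :=
    Finset.sum_nonneg fun k _ => Finset.sum_nonneg fun l _ => abs_nonneg _
  unfold Cq; linarith

lemma isFiniteMeasure_restrict_Ioc (a b : ℝ) :
    IsFiniteMeasure (volume.restrict (Set.Ioc a b)) := by
  constructor
  rw [Measure.restrict_apply_univ, Real.volume_Ioc]
  exact ENNReal.ofReal_lt_top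

lemma memLp_of_continuous_Ioc {E : Type*} [NormedAddCommGroup E] {f : ℝ → E}
    (hf : Continuous f) (a b : ℝ) (p : ℝ≥0∞) :
    MemLp f p (volume.restrict (Set.Ioc a b)) := by
  haveI := isFiniteMeasure_restrict_Ioc a b
  obtain ⟨C, hC⟩ := (isCompact_Icc (a := a) (b := b)).exists_bound_of_continuousOn
    hf.continuousOn
  refine (memLp_top_of_bound hf.aestronglyMeasurable C ?_).mono_exponent le_top
  exact (ae_restrict_iff' measurableSet_Ioc).2
    (Filter.Eventually.of_forall fun x hx => hC x (Set.Ioc_subset_Icc_self hx))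

lemma integral_phi {tn tn1 : ℝ} (h : tn < tn1) (n : ℕ) :
    (∫ x in Set.Ioc tn tn1, ((x - tn) / (tn1 - tn)) ^ n) = (tn1 - tn) / (n + 1) := by
  have hτ : (0:ℝ) < tn1 - tn := by linarith
  rw [← intervalIntegral.integral_of_le h.le]
  have hpt : ∀ x : ℝ, ((x - tn) / (tn1 - tn)) ^ n = ((tn1 - tn) ^ n)⁻¹ * (x - tn) ^ n := by
    intro x; rw [div_pow]; ring
  simp_rw [hpt]
  rw [intervalIntegral.integral_const_mul,
    intervalIntegral.integral_comp_sub_right (fun u => u ^ n) tn, integral_pow, sub_self,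
    zero_pow (by omega : n + 1 ≠ 0)]
  have h1 : ((tn1 - tn) ^ n) ≠ 0 := pow_ne_zero _ (ne_of_gt hτ)
  have h2 : ((n : ℝ) + 1) ≠ 0 := by positivity
  field_simp
  ring

lemma sqrt_integral_eq_eLpNorm {α : Type*} [MeasurableSpace α] {μ : Measure α}
    {E : Type*} [NormedAddCommGroup E] {f : α → E} (hf : MemLp f 2 μ) :
    Real.sqrt (∫ x, ‖f x‖ ^ 2 ∂μ) = (eLpNorm f 2 μ).toReal := by
  rw [hf.eLpNorm_eq_integral_rpow_norm two_ne_zero ENNReal.ofNat_ne_top]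
  have h0 : 0 ≤ ∫ a, ‖f a‖ ^ (2:ℝ≥0∞).toReal ∂μ :=
    integral_nonneg fun a => Real.rpow_nonneg (norm_nonneg _) _
  rw [ENNReal.toReal_ofReal (Real.rpow_nonneg h0 _)]
  simp only [ENNReal.toReal_ofNat]
  rw [Real.sqrt_eq_rpow]
  have : ∀ x : ℝ, x ^ (2:ℝ) = x ^ (2:ℕ) := fun x => by
    rw [← Real.rpow_natCast x 2]; norm_num
  simp_rw [this]
  norm_num

lemma main_est (q : ℕ) (hq : 1 ≤ q) (V : Type*) [NormedAddCommGroup V]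
    [NormedSpace ℝ V] [CompleteSpace V] {tn tn1 : ℝ} (h : tn < tn1)
    (v : ℝ → V) (hv : MemLp v 2 (volume.restrict (Set.Ioc tn tn1)))
    (p : ℝ → V)
    (hp : ∃ c : Fin (q + 1) → V, ∀ x : ℝ, p x = ∑ j : Fin (q + 1), x ^ (j : ℕ) • c j)
    (hp0 : p tn = 0)
    (hmom : ∀ l < q, (∫ x in Set.Ioc tn tn1, (x - tn) ^ l • (v x - p x)) = 0) :
    Real.sqrt (∫ x in Set.Ioc tn tn1, ‖p x‖ ^ 2) ≤
      Cq q * Real.sqrt (∫ x in Set.Ioc tn tn1, ‖v x‖ ^ 2) := by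
  obtain ⟨c, hpc⟩ := hp
  haveI := isFiniteMeasure_restrict_Ioc tn tn1
  set μ := volume.restrict (Set.Ioc tn tn1) with hμ
  set τ := tn1 - tn with hτdef
  have hτ : 0 < τ := sub_pos.mpr h
  set y : ℝ → ℝ := fun x => (x - tn) / τ with hy
  set φ : ℕ → ℝ → ℝ := fun n x => y x ^ n with hφ
  have hφc : ∀ n, Continuous (φ n) :=
    fun n => ((continuous_id.sub continuous_const).div_const τ).pow n
  have hyIoc : ∀ x ∈ Set.Ioc tn tn1, 0 < y x ∧ y x ≤ 1 := by
    intro x hx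
    constructor
    · exact div_pos (sub_pos.mpr hx.1) hτ
    · rw [div_le_one hτ]
      simp only [hτdef]
      linarith [hx.2]
  have hφ_bd : ∀ n, ∀ᵐ x ∂μ, ‖φ n x‖ ≤ 1 := by
    intro n
    refine (ae_restrict_iff' measurableSet_Ioc).2 (Filter.Eventually.of_forall fun x hx => ?_)
    obtain ⟨h1, h2⟩ := hyIoc x hx
    simp only [hφ, Real.norm_eq_abs, abs_pow]
    calc |y x| ^ n ≤ 1 ^ n := by
          refine pow_le_pow_left₀ (abs_nonneg _) ?_ n
          rw [abs_of_pos h1]; exact h2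
      _ = 1 := one_pow n
  have hφtop : ∀ n, MemLp (φ n) ∞ μ :=
    fun n => memLp_top_of_bound (hφc n).aestronglyMeasurable 1 (hφ_bd n)
  have hIk : ∀ n : ℕ, (∫ x, φ n x ∂μ) = τ / (n + 1) := fun n => integral_phi h n
  -- basis change
  set b : Fin (q + 1) → V := fun i => ∑ j : Fin (q + 1),
    (if (i : ℕ) ≤ (j : ℕ) then
      (((j : ℕ).choose (i : ℕ) : ℝ) * tn ^ ((j : ℕ) - (i : ℕ)) * τ ^ (i : ℕ)) else 0) • c j
    with hb
  have hpb : ∀ x : ℝ, p x = ∑ i : Fin (q + 1), y x ^ (i : ℕ) • b i := by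
    intro x
    have hx : τ * y x + tn = x := by
      show τ * ((x - tn) / τ) + tn = x
      rw [mul_div_cancel₀ _ (ne_of_gt hτ)]; ring
    rw [hpc x]
    calc ∑ j : Fin (q + 1), x ^ (j : ℕ) • c j
        = ∑ j : Fin (q + 1), (∑ i : Fin (q + 1),
            if (i : ℕ) ≤ (j : ℕ) then
              y x ^ (i : ℕ) * (((j : ℕ).choose (i : ℕ) : ℝ) * tn ^ ((j : ℕ) - (i : ℕ))
                * τ ^ (i : ℕ)) else 0) • c j := by
          refine Finset.sum_congr rfl fun j _ => ?_
          congr 1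
          have key : ∀ Y : ℝ, (τ * Y + tn) ^ (j : ℕ)
              = ∑ i : Fin (q + 1), (if (i : ℕ) ≤ (j : ℕ) then
                  Y ^ (i : ℕ) * (((j : ℕ).choose (i : ℕ) : ℝ) * tn ^ ((j : ℕ) - (i : ℕ))
                    * τ ^ (i : ℕ)) else 0) := by
            intro Y
            rw [Fin.sum_univ_eq_sum_range (fun i => if i ≤ (j : ℕ) then
              Y ^ i * (((j : ℕ).choose i : ℝ) * tn ^ ((j : ℕ) - i) * τ ^ i) else 0)]
            rw [← Finset.sum_filter]
            have hfil : (Finset.range (q + 1)).filter (· ≤ (j : ℕ))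
                = Finset.range ((j : ℕ) + 1) := by
              ext i
              simp only [Finset.mem_filter, Finset.mem_range]
              omega
            rw [hfil, add_pow]
            refine Finset.sum_congr rfl fun i hi => ?_
            rw [mul_pow]
            ring
          conv_lhs => rw [← hx]
          exact key (y x)
    _ = ∑ i : Fin (q + 1), y x ^ (i : ℕ) • b i := by
          simp_rw [Finset.sum_smul]
          rw [Finset.sum_comm]
          refine Finset.sum_congr rfl fun i _ => ?_
          rw [hb, Finset.smul_sum]
          refine Finset.sum_congr rfl fun j _ => ?_
          rw [smul_smul, mul_ite, mul_zero]
  have hb0 : b 0 = 0 := by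
    have h1 := hpb tn
    rw [hp0] at h1
    have h2 : y tn = 0 := by simp [hy]
    rw [h2] at h1
    rw [Fin.sum_univ_succ] at h1
    simp only [Fin.val_zero, pow_zero, one_smul, Fin.val_succ, pow_succ, zero_pow, zero_mul,
      mul_zero, zero_smul, Finset.sum_const_zero, add_zero] at h1
    exact h1.symm
  set B : Fin q → V := fun k => b k.succ with hB
  have hpB : ∀ x : ℝ, p x = ∑ k : Fin q, φ ((k : ℕ) + 1) x • B k := by
    intro x
    rw [hpb x, Fin.sum_univ_succ, hb0, smul_zero, zero_add]
    refine Finset.sum_congr rfl fun k _ => ?_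
    simp [hφ, hB, Fin.val_succ]
  -- integrability
  have hpcont : Continuous p := by
    have : p = fun x => ∑ j : Fin (q + 1), x ^ (j : ℕ) • c j := funext hpc
    rw [this]
    exact continuous_finset_sum _ fun j _ => (continuous_pow _).smul continuous_const
  have hp2 : MemLp p 2 μ := memLp_of_continuous_Ioc hpcont tn tn1 2
  have hsmul_int : ∀ (n : ℕ) (f : ℝ → V), MemLp f 2 μ → Integrable (fun x => φ n x • f x) μ := by
    intro n f hf
    exact (hf.smul (r := 2) (hφtop n)).integrable (by norm_num)
  -- normalized moment conditions
  have hm : ∀ l : Fin q, (∫ x, φ (l : ℕ) x • p x ∂μ) = ∫ x, φ (l : ℕ) x • v x ∂μ := by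
    intro l
    have h1 : (∫ x, φ (l : ℕ) x • (v x - p x) ∂μ) = 0 := by
      have hpt : ∀ x : ℝ, φ (l : ℕ) x • (v x - p x)
          = (τ ^ (l : ℕ))⁻¹ • ((x - tn) ^ (l : ℕ) • (v x - p x)) := by
        intro x
        rw [smul_smul]
        congr 1
        simp only [hφ, hy, div_pow]
        rw [div_eq_inv_mul]
      simp_rw [hpt]
      rw [integral_smul, hmom (l : ℕ) l.2, smul_zero]
    have h2 : (∫ x, φ (l : ℕ) x • v x ∂μ) - (∫ x, φ (l : ℕ) x • p x ∂μ) = 0 := by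
      rw [← integral_sub (hsmul_int _ v hv) (hsmul_int _ p hp2)]
      simpa [smul_sub] using h1
    exact (sub_eq_zero.mp h2).symm
  set m : Fin q → V := fun l => ∫ x, φ (l : ℕ) x • v x ∂μ with hmdef
  -- the linear system
  have hsys : ∀ l : Fin q, (∑ k : Fin q, (τ * Mmat q l k) • B k) = m l := by
    intro l
    rw [hmdef]
    simp only
    rw [← hm l]
    have hpt : ∀ x : ℝ, φ (l : ℕ) x • p x
        = ∑ k : Fin q, φ ((l : ℕ) + (k : ℕ) + 1) x • B k := by
      intro x
      rw [hpB x, Finset.smul_sum]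
      refine Finset.sum_congr rfl fun k _ => ?_
      rw [smul_smul]
      congr 1
      simp only [hφ]
      rw [← pow_add]
      have hnat : (l : ℕ) + ((k : ℕ) + 1) = (l : ℕ) + (k : ℕ) + 1 := by omega
      rw [hnat]
    have : (fun x => φ (l : ℕ) x • p x) = fun x => ∑ k : Fin q,
        φ ((l : ℕ) + (k : ℕ) + 1) x • B k := funext hpt
    rw [this]
    rw [integral_finset_sum _ (fun k _ => hsmul_int _ _ (memLp_const (B k)))]
    refine (Finset.sum_congr rfl fun k _ => ?_).symm
    rw [integral_smul_const, hIk]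
    congr 1
    simp only [Mmat, Matrix.of_apply]
    push_cast
    rw [div_eq_mul_inv]
    norm_num
    left
    ring
  have hinner : ∀ l : Fin q, (∑ k : Fin q, Mmat q l k • B k) = τ⁻¹ • m l := by
    intro l
    have h2 : τ • ∑ k : Fin q, Mmat q l k • B k = τ • (τ⁻¹ • m l) := by
      rw [smul_smul, mul_inv_cancel₀ (ne_of_gt hτ), one_smul, ← hsys l, Finset.smul_sum]
      exact Finset.sum_congr rfl fun k _ => by rw [smul_smul]
    exact smul_right_injective V (ne_of_gt hτ) h2
  have hBk : ∀ k : Fin q, B k = ∑ l : Fin q, Nmat q k l • (τ⁻¹ • m l) := by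
    intro k
    calc B k = ∑ i : Fin q, ((1 : Matrix (Fin q) (Fin q) ℝ) k i) • B i := by
          simp [Matrix.one_apply]
    _ = ∑ i : Fin q, (∑ l : Fin q, Nmat q k l * Mmat q l i) • B i := by
          rw [← Nmat_mul q]
          simp [Matrix.mul_apply]
    _ = ∑ l : Fin q, Nmat q k l • (∑ i : Fin q, Mmat q l i • B i) := by
          simp_rw [Finset.sum_smul, Finset.smul_sum, smul_smul]
          rw [Finset.sum_comm]
    _ = ∑ l : Fin q, Nmat q k l • (τ⁻¹ • m l) := by
          refine Finset.sum_congr rfl fun l _ => ?_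
          rw [hinner l]
  -- Cauchy-Schwarz bound on the moments
  set S : ℝ := Real.sqrt (∫ x, ‖v x‖ ^ 2 ∂μ) with hS
  have hS0 : 0 ≤ S := Real.sqrt_nonneg _
  have hml : ∀ l : Fin q, ‖m l‖ ≤ Real.sqrt τ * S := by
    intro l
    have h1 : ‖m l‖ ≤ ∫ x, ‖φ (l : ℕ) x‖ * ‖v x‖ ∂μ := by
      refine (norm_integral_le_integral_norm _).trans_eq ?_
      refine integral_congr_ae (Filter.Eventually.of_forall fun x => ?_)
      simp [norm_smul]
    have hconj : (2 : ℝ).HolderConjugate 2 := Real.HolderConjugate.two_two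
    have h2' : ENNReal.ofReal (2 : ℝ) = 2 := by norm_num
    have hfmem : MemLp (fun x => ‖φ (l : ℕ) x‖) (ENNReal.ofReal (2 : ℝ)) μ := by
      rw [h2']
      exact ((hφtop (l : ℕ)).mono_exponent le_top).norm
    have hgmem : MemLp (fun x => ‖v x‖) (ENNReal.ofReal (2 : ℝ)) μ := by
      rw [h2']
      exact hv.norm
    have hH := integral_mul_le_Lp_mul_Lq_of_nonneg hconj
      (Filter.Eventually.of_forall fun x => norm_nonneg _)
      (Filter.Eventually.of_forall fun x => norm_nonneg _) hfmem hgmem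
    have hrpow2 : ∀ t : ℝ, 0 ≤ t → t ^ (2 : ℝ) = t ^ (2 : ℕ) := by
      intro t ht
      rw [← Real.rpow_natCast t 2]
      norm_num
    have hfac1 : (∫ x, ‖φ (l : ℕ) x‖ ^ (2 : ℝ) ∂μ) ^ ((1 : ℝ) / 2) ≤ Real.sqrt τ := by
      have hptw : ∀ x : ℝ, ‖φ (l : ℕ) x‖ ^ (2 : ℝ) = φ ((l : ℕ) + (l : ℕ)) x := by
        intro x
        rw [hrpow2 _ (norm_nonneg _)]
        simp only [hφ, Real.norm_eq_abs]
        rw [sq_abs, ← pow_mul]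
        congr 1
        omega
      simp_rw [hptw]
      rw [hIk]
      rw [Real.sqrt_eq_rpow]
      refine Real.rpow_le_rpow (by positivity) ?_ (by norm_num)
      rw [div_le_iff₀ (by positivity)]
      nlinarith [hτ]
    have hfac2 : (∫ x, ‖v x‖ ^ (2 : ℝ) ∂μ) ^ ((1 : ℝ) / 2) = S := by
      rw [hS, Real.sqrt_eq_rpow]
      congr 1
      refine integral_congr_ae (Filter.Eventually.of_forall fun x => ?_)
      exact hrpow2 _ (norm_nonneg _)
    calc ‖m l‖ ≤ ∫ x, ‖φ (l : ℕ) x‖ * ‖v x‖ ∂μ := h1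
    _ ≤ (∫ x, ‖φ (l : ℕ) x‖ ^ (2 : ℝ) ∂μ) ^ ((1 : ℝ) / 2)
        * (∫ x, ‖v x‖ ^ (2 : ℝ) ∂μ) ^ ((1 : ℝ) / 2) := hH
    _ ≤ Real.sqrt τ * S := by
        rw [hfac2]
        exact mul_le_mul_of_nonneg_right hfac1 (hfac2 ▸ Real.rpow_nonneg
          (integral_nonneg fun x => Real.rpow_nonneg (norm_nonneg _) _) _)
  -- L² bound on p via eLpNorm
  have hLHS : Real.sqrt (∫ x, ‖p x‖ ^ 2 ∂μ) = (eLpNorm p 2 μ).toReal :=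
    sqrt_integral_eq_eLpNorm hp2
  have hterm_bound : ∀ k : Fin q,
      eLpNorm (fun x => φ ((k : ℕ) + 1) x • B k) 2 μ ≤ ENNReal.ofReal (Real.sqrt τ * ‖B k‖) := by
    intro k
    have hbd : ∀ᵐ x ∂μ, ‖φ ((k : ℕ) + 1) x • B k‖ ≤ ‖B k‖ := by
      filter_upwards [hφ_bd ((k : ℕ) + 1)] with x hx
      rw [norm_smul]
      calc ‖φ ((k : ℕ) + 1) x‖ * ‖B k‖ ≤ 1 * ‖B k‖ :=
            mul_le_mul_of_nonneg_right hx (norm_nonneg _)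
      _ = ‖B k‖ := one_mul _
    refine (eLpNorm_le_of_ae_bound hbd).trans_eq ?_
    rw [hμ, Measure.restrict_apply_univ, Real.volume_Ioc]
    rw [ENNReal.toReal_ofNat]
    rw [ENNReal.ofReal_rpow_of_pos (by simpa [hτdef] using hτ)]
    rw [← ENNReal.ofReal_mul (by positivity)]
    congr 1
    rw [Real.sqrt_eq_rpow]
    norm_num
    exact Or.inl rfl
  have hsum : eLpNorm p 2 μ ≤ ENNReal.ofReal (∑ k : Fin q, Real.sqrt τ * ‖B k‖) := by
    have hrep : p = ∑ k : Fin q, (fun x => φ ((k : ℕ) + 1) x • B k) := by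
      funext x
      rw [hpB x]
      simp [Finset.sum_apply]
    calc eLpNorm p 2 μ
        = eLpNorm (∑ k : Fin q, fun x => φ ((k : ℕ) + 1) x • B k) 2 μ := by rw [← hrep]
    _ ≤ ∑ k : Fin q, eLpNorm (fun x => φ ((k : ℕ) + 1) x • B k) 2 μ :=
        eLpNorm_sum_le (fun k _ => ((hφc _).smul continuous_const).aestronglyMeasurable)
          (by norm_num)
    _ ≤ ∑ k : Fin q, ENNReal.ofReal (Real.sqrt τ * ‖B k‖) :=
        Finset.sum_le_sum fun k _ => hterm_bound k
    _ = ENNReal.ofReal (∑ k : Fin q, Real.sqrt τ * ‖B k‖) :=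
        (ENNReal.ofReal_sum_of_nonneg fun k _ => by positivity).symm
  have hfinal : (eLpNorm p 2 μ).toReal ≤ ∑ k : Fin q, Real.sqrt τ * ‖B k‖ :=
    ENNReal.toReal_le_of_le_ofReal (by positivity) hsum
  -- assemble
  have hterm : ∀ k : Fin q, Real.sqrt τ * ‖B k‖ ≤ (∑ l : Fin q, |Nmat q k l|) * S := by
    intro k
    have h1 : ‖B k‖ ≤ ∑ l : Fin q, |Nmat q k l| * (τ⁻¹ * (Real.sqrt τ * S)) := by
      rw [hBk k]
      refine (norm_sum_le _ _).trans (Finset.sum_le_sum fun l _ => ?_)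
      rw [norm_smul, norm_smul, Real.norm_eq_abs, Real.norm_eq_abs,
        abs_of_nonneg (inv_nonneg.mpr hτ.le)]
      have := hml l
      gcongr
    calc Real.sqrt τ * ‖B k‖
        ≤ Real.sqrt τ * ∑ l : Fin q, |Nmat q k l| * (τ⁻¹ * (Real.sqrt τ * S)) :=
          mul_le_mul_of_nonneg_left h1 (Real.sqrt_nonneg _)
    _ = (∑ l : Fin q, |Nmat q k l|) * S * (Real.sqrt τ * Real.sqrt τ * τ⁻¹) := by
          rw [← Finset.sum_mul]
          ring
    _ = (∑ l : Fin q, |Nmat q k l|) * S := by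
          rw [Real.mul_self_sqrt hτ.le, mul_inv_cancel₀ (ne_of_gt hτ), mul_one]
  have hCle : (∑ k : Fin q, ∑ l : Fin q, |Nmat q k l|) ≤ Cq q := by
    unfold Cq; linarith
  calc Real.sqrt (∫ x in Set.Ioc tn tn1, ‖p x‖ ^ 2)
      = (eLpNorm p 2 μ).toReal := hLHS
  _ ≤ ∑ k : Fin q, Real.sqrt τ * ‖B k‖ := hfinal
  _ ≤ ∑ k : Fin q, (∑ l : Fin q, |Nmat q k l|) * S := Finset.sum_le_sum fun k _ => hterm k
  _ = (∑ k : Fin q, ∑ l : Fin q, |Nmat q k l|) * S := by rw [Finset.sum_mul]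
  _ ≤ Cq q * S := mul_le_mul_of_nonneg_right hCle hS0
  _ = Cq q * Real.sqrt (∫ x in Set.Ioc tn tn1, ‖v x‖ ^ 2) := rfl

/-- **Lemma 3.1, estimate (3.2b) (L² stability of the projection `π_n`):** there is a
constant `C_q > 0` depending only on `q` such that `‖π_n v‖_{L²(J_n;U)} ≤ C_q ‖v‖_{L²(J_n;U)}`
for every `v ∈ L²(J_n; V)`, both for `U = V` and for `U = H`. The projection `π_n v` is
represented by any polynomial `p` satisfying its characterizing conditions. -/
theorem projection_stability (q : ℕ) (hq : 1 ≤ q) :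
    ∃ C : ℝ, 0 < C ∧
      ∀ (V : Type u) [NormedAddCommGroup V] [InnerProductSpace ℝ V] [CompleteSpace V]
        (H : Type w) [NormedAddCommGroup H] [InnerProductSpace ℝ H] [CompleteSpace H]
        (ι : V →L[ℝ] H), Function.Injective ι →
      ∀ tn tn1 : ℝ, tn < tn1 →
      ∀ v : ℝ → V, MemLp v 2 (volume.restrict (Set.Ioc tn tn1)) →
      ∀ p : ℝ → V,
        (∃ c : Fin (q + 1) → V, ∀ x : ℝ, p x = ∑ j : Fin (q + 1), x ^ (j : ℕ) • c j) →
        p tn = 0 →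
        (∀ l < q, (∫ x in Set.Ioc tn tn1, (x - tn) ^ l • (v x - p x)) = 0) →
        Real.sqrt (∫ x in Set.Ioc tn tn1, ‖p x‖ ^ 2) ≤
            C * Real.sqrt (∫ x in Set.Ioc tn tn1, ‖v x‖ ^ 2) ∧
        Real.sqrt (∫ x in Set.Ioc tn tn1, ‖ι (p x)‖ ^ 2) ≤
            C * Real.sqrt (∫ x in Set.Ioc tn tn1, ‖ι (v x)‖ ^ 2) := by
  refine ⟨Cq q, Cq_pos q, ?_⟩
  intro V _ _ _ H _ _ _ ι hι tn tn1 h v hv p hp hp0 hmom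
  haveI := isFiniteMeasure_restrict_Ioc tn tn1
  obtain ⟨c, hpc⟩ := hp
  constructor
  · exact main_est q hq V h v hv p ⟨c, hpc⟩ hp0 hmom
  · have hv' : MemLp (fun x => ι (v x)) 2 (volume.restrict (Set.Ioc tn tn1)) := by
      have := ι.comp_memLp' hv
      exact this
    have hpcont : Continuous p := by
      have : p = fun x => ∑ j : Fin (q + 1), x ^ (j : ℕ) • c j := funext hpc
      rw [this]
      exact continuous_finset_sum _ fun j _ => (continuous_pow _).smul continuous_const
    have hp2 : MemLp p 2 (volume.restrict (Set.Ioc tn tn1)) :=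
      memLp_of_continuous_Ioc hpcont tn tn1 2
    have hvp2 : MemLp (fun x => v x - p x) 2 (volume.restrict (Set.Ioc tn tn1)) := hv.sub hp2
    have hmom' : ∀ l < q,
        (∫ x in Set.Ioc tn tn1, (x - tn) ^ l • (ι (v x) - ι (p x))) = 0 := by
      intro l hl
      have hψc : Continuous fun x : ℝ => (x - tn) ^ l :=
        (continuous_id.sub continuous_const).pow l
      have hψtop : MemLp (fun x : ℝ => (x - tn) ^ l) ⊤ (volume.restrict (Set.Ioc tn tn1)) :=
        memLp_of_continuous_Ioc hψc tn tn1 ⊤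
      have hint : Integrable (fun x => (x - tn) ^ l • (v x - p x))
          (volume.restrict (Set.Ioc tn tn1)) :=
        (hvp2.smul (r := 2) hψtop).integrable (by norm_num)
      have heq : (fun x => (x - tn) ^ l • (ι (v x) - ι (p x)))
          = fun x => ι ((x - tn) ^ l • (v x - p x)) := by
        funext x
        rw [_root_.map_smul, map_sub]
      rw [heq, ContinuousLinearMap.integral_comp_comm ι hint, hmom l hl, map_zero]
    have hp' : ∃ c' : Fin (q + 1) → H, ∀ x : ℝ,
        ι (p x) = ∑ j : Fin (q + 1), x ^ (j : ℕ) • c' j :=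
      ⟨fun j => ι (c j), fun x => by rw [hpc x]; simp [map_sum, _root_.map_smul]⟩
    have hp0' : ι (p tn) = 0 := by rw [hp0, map_zero]
    exact main_est q hq H h (fun x => ι (v x)) hv' (fun x => ι (p x)) hp' hp0' hmom'
end

section
/- Existence and stability of the modified discrete characteristic function (properties (3.8) in the proof of Lemma 3.1): there exists a constant c'_q > 0 depending only on q such that for every U-valued polynomial ṽ of degree ≤ q with ṽ(t_n) = 0 and every s ∈ J_n, there exists a U-valued polynomial v̂ of degree ≤ q satisfying (i) v̂(t_{n+1}) = ṽ(t_{n+1}); (ii) ∫_{J_n} v̂(t) (t − t_n)^l dt = ∫_{t_n}^{s} ṽ(t) (t − t_n)^l dt (Bochner integrals with values in U) for every l = 0, …, q − 1; and (iii) ‖v̂‖_{L²(J_n;U)} ≤ c'_q ‖ṽ‖_{L²(J_n;U)}. -/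
open MeasureTheory Polynomial

namespace DCF

universe v

lemma int_pow {tn r : ℝ} (h : tn ≤ r) (m : ℕ) :
    ∫ x in Set.Ioc tn r, (x - tn) ^ m = (r - tn) ^ (m + 1) / (m + 1) := by
  rw [← intervalIntegral.integral_of_le h,
    intervalIntegral.integral_comp_sub_right (fun x => x ^ m) tn]
  simp [integral_pow]


lemma key_int {tn r τ : ℝ} (hτ : τ ≠ 0) (h : tn ≤ r) (l j : ℕ) :
    ∫ x in Set.Ioc tn r, (x - tn) ^ l * ((x - tn) / τ) ^ j
      = τ⁻¹ ^ j * ((r - tn) ^ (l + j + 1) / (l + j + 1)) := by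
  have e : ∀ x : ℝ, (x - tn) ^ l * ((x - tn) / τ) ^ j = τ⁻¹ ^ j * (x - tn) ^ (l + j) := by
    intro x; rw [div_pow, pow_add]; ring
  simp_rw [e]
  rw [integral_const_mul, int_pow h]; push_cast; ring

lemma poly_int_pos {P : Polynomial ℝ} (hP : P ≠ 0)
    (h : ∀ x ∈ Set.Ioc (0:ℝ) 1, 0 ≤ P.eval x) :
    0 < ∫ x in Set.Ioc (0:ℝ) 1, P.eval x := by
  have hint : IntegrableOn (fun x => P.eval x) (Set.Ioc (0:ℝ) 1) :=
    P.continuous.integrableOn_Ioc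
  rw [setIntegral_pos_iff_support_of_nonneg_ae ?_ hint]
  · have hroots : (volume {x : ℝ | P.IsRoot x}) = 0 :=
      (Polynomial.finite_setOf_isRoot hP).measure_zero _
    have hsub : Set.Ioc (0:ℝ) 1 \ {x : ℝ | P.IsRoot x} ⊆
        (Function.support fun x => P.eval x) ∩ Set.Ioc (0:ℝ) 1 := by
      rintro x ⟨hx1, hx2⟩
      exact ⟨fun hc => hx2 hc, hx1⟩
    calc (0:ENNReal) < volume (Set.Ioc (0:ℝ) 1 \ {x : ℝ | P.IsRoot x}) := by
          rw [measure_diff_null hroots]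
          simp [Real.volume_Ioc]
      _ ≤ _ := measure_mono hsub
  · filter_upwards [ae_restrict_mem measurableSet_Ioc] with x hx using h x hx

lemma poly_moment {n : ℕ} {P : Polynomial ℝ} (hdeg : P.natDegree < n) (k : ℕ) :
    ∫ x in Set.Ioc (0:ℝ) 1, P.eval x * x ^ k
      = ∑ j ∈ Finset.range n, P.coeff j / (j + k + 1) := by
  have e : ∀ x : ℝ, P.eval x * x ^ k = ∑ j ∈ Finset.range n, P.coeff j * (x ^ (j + k)) := by
    intro x
    rw [Polynomial.eval_eq_sum_range' hdeg, Finset.sum_mul]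
    exact Finset.sum_congr rfl fun j _ => by rw [pow_add]; ring
  simp_rw [e]
  rw [integral_finset_sum]
  · refine Finset.sum_congr rfl fun j _ => ?_
    rw [integral_const_mul]
    have := int_pow (tn := (0:ℝ)) (r := 1) zero_le_one (j + k)
    simp only [sub_zero] at this
    rw [this]
    push_cast
    rw [one_pow, div_eq_mul_inv]
    ring
  · intro j _
    exact ((continuous_const.mul (continuous_pow _)).integrableOn_Ioc)

/-! ### polynomials from coefficient vectors -/

noncomputable def polyOf {n : ℕ} (c : Fin n → ℝ) : Polynomial ℝ :=
  ∑ j : Fin n, monomial (j : ℕ) (c j)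

lemma polyOf_coeff {n : ℕ} (c : Fin n → ℝ) {j : ℕ} (hj : j < n) :
    (polyOf c).coeff j = c ⟨j, hj⟩ := by
  rw [polyOf, Polynomial.finset_sum_coeff]
  rw [Finset.sum_eq_single (⟨j, hj⟩ : Fin n)]
  · simp
  · intro b _ hb
    rw [Polynomial.coeff_monomial, if_neg]
    exact fun hc => hb (Fin.ext hc)
  · simp

lemma polyOf_natDegree {n : ℕ} (c : Fin (n+1) → ℝ) : (polyOf c).natDegree ≤ n := by
  refine Polynomial.natDegree_sum_le_of_forall_le _ _ fun j _ => ?_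
  exact (Polynomial.natDegree_monomial_le _).trans (Nat.lt_succ_iff.mp j.isLt)

lemma polyOf_eval {n : ℕ} (c : Fin n → ℝ) (x : ℝ) :
    (polyOf c).eval x = ∑ j : Fin n, c j * x ^ (j : ℕ) := by
  rw [polyOf, Polynomial.eval_finset_sum]
  simp [Polynomial.eval_monomial]

lemma polyOf_eq_zero {n : ℕ} {c : Fin n → ℝ} (h : polyOf c = 0) : c = 0 := by
  funext j
  have := polyOf_coeff c j.isLt
  rw [h] at this
  simpa using this.symm

/-! ### matrices -/

noncomputable def Hmat (q : ℕ) : Matrix (Fin (q+1)) (Fin (q+1)) ℝ :=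
  Matrix.of fun k j => (((j : ℕ) + (k : ℕ) + 1 : ℕ) : ℝ)⁻¹

noncomputable def Phi (q : ℕ) : Matrix (Fin (q+1)) (Fin (q+1)) ℝ :=
  Matrix.of fun k j => if (k : ℕ) = 0 then 1 else (((j : ℕ) + (k : ℕ) : ℕ) : ℝ)⁻¹

lemma exists_solution {n : ℕ} {M : Matrix (Fin n) (Fin n) ℝ}
    (h : Function.Injective M.mulVec) (v : Fin n → ℝ) : ∃ a, M.mulVec a = v := by
  have h' : Function.Injective M.mulVecLin := h
  exact (LinearMap.injective_iff_surjective.mp h') v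

lemma exists_right_inverse {n : ℕ} {M : Matrix (Fin n) (Fin n) ℝ}
    (h : Function.Injective M.mulVec) :
    ∃ Ψ : Matrix (Fin n) (Fin n) ℝ,
      ∀ k m, ∑ j, M k j * Ψ j m = if k = m then 1 else 0 := by
  choose Ψt hΨ using fun m => exists_solution h (fun k => if k = m then (1:ℝ) else 0)
  refine ⟨Matrix.of fun j m => Ψt m j, fun k m => ?_⟩
  have := congrFun (hΨ m) k
  simpa [Matrix.mulVec, dotProduct] using this

lemma mulVec_injective_of_ker {n : ℕ} {M : Matrix (Fin n) (Fin n) ℝ}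
    (h : ∀ c, M.mulVec c = 0 → c = 0) : Function.Injective M.mulVec := by
  intro c c' hcc
  have : M.mulVec (c - c') = 0 := by
    rw [Matrix.mulVec_sub, hcc, sub_self]
  have := h _ this
  exact sub_eq_zero.mp this

lemma Hmat_inj (q : ℕ) : Function.Injective (Hmat q).mulVec := by
  refine mulVec_injective_of_ker fun c hc => ?_
  set P := polyOf c with hPdef
  have hdeg : P.natDegree < q + 1 := Nat.lt_succ_of_le (polyOf_natDegree c)
  have hmom : ∀ k : Fin (q+1), ∫ x in Set.Ioc (0:ℝ) 1, P.eval x * x ^ (k:ℕ) = 0 := by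
    intro k
    rw [poly_moment hdeg]
    have := congrFun hc k
    simp only [Matrix.mulVec, dotProduct, Pi.zero_apply] at this
    rw [← this]
    rw [← Fin.sum_univ_eq_sum_range (fun j => P.coeff j / (j + (k:ℕ) + 1))]
    refine Finset.sum_congr rfl fun j _ => ?_
    rw [polyOf_coeff c j.isLt, Hmat]
    push_cast
    rw [Matrix.of_apply]
    push_cast
    rw [div_eq_mul_inv]
    ring
  suffices hP : P = 0 by
    funext j; exact congrFun (polyOf_eq_zero hP) j
  by_contra hP
  have hpos : 0 < ∫ x in Set.Ioc (0:ℝ) 1, (P * P).eval x :=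
    poly_int_pos (mul_ne_zero hP hP) (fun x _ => by rw [eval_mul]; exact mul_self_nonneg _)
  have hzero : ∫ x in Set.Ioc (0:ℝ) 1, (P * P).eval x = 0 := by
    have e : ∀ x : ℝ, (P * P).eval x
        = ∑ k ∈ Finset.range (q+1), P.coeff k * (P.eval x * x ^ k) := by
      intro x
      rw [eval_mul]
      nth_rewrite 2 [Polynomial.eval_eq_sum_range' hdeg]
      rw [Finset.mul_sum]
      exact Finset.sum_congr rfl fun k _ => by ring
    simp_rw [e]
    rw [integral_finset_sum]
    · refine Finset.sum_eq_zero fun k hk => ?_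
      rw [integral_const_mul]
      have : (k : ℕ) = k := rfl
      rw [hmom ⟨k, Finset.mem_range.mp hk⟩]
      ring
    · intro k _
      exact (continuous_const.mul (P.continuous.mul (continuous_pow _))).integrableOn_Ioc
  exact absurd hzero hpos.ne'

lemma Phi_inj (q : ℕ) (hq : 1 ≤ q) : Function.Injective (Phi q).mulVec := by
  refine mulVec_injective_of_ker fun c hc => ?_
  set P := polyOf c with hPdef
  have hdeg : P.natDegree ≤ q := polyOf_natDegree c
  have hrow : ∀ k : Fin (q+1), ∑ j : Fin (q+1), Phi q k j * c j = 0 := by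
    intro k
    have := congrFun hc k
    simpa [Matrix.mulVec, dotProduct] using this
  have h1 : P.eval 1 = 0 := by
    rw [polyOf_eval]
    have := hrow 0
    simp only [Phi, Matrix.of_apply] at this
    simpa using this
  have hmom : ∀ l, l < q → ∫ x in Set.Ioc (0:ℝ) 1, P.eval x * x ^ l = 0 := by
    intro l hl
    rw [poly_moment (Nat.lt_succ_of_le hdeg)]
    have := hrow ⟨l + 1, by omega⟩
    simp only [Phi, Matrix.of_apply] at this
    rw [← Fin.sum_univ_eq_sum_range (fun j => P.coeff j / (j + (l:ℕ) + 1))]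
    rw [← this]
    refine Finset.sum_congr rfl fun j _ => ?_
    rw [polyOf_coeff c j.isLt, if_neg (by simp)]
    push_cast
    rw [div_eq_mul_inv]
    ring
  suffices hP : P = 0 by
    funext j; exact congrFun (polyOf_eq_zero hP) j
  by_contra hP
  obtain ⟨R, hR⟩ := Polynomial.dvd_iff_isRoot.mpr h1
  have hRne : R ≠ 0 := by rintro rfl; exact hP (by simp [hR])
  have hRdeg : R.natDegree < q := by
    have := Polynomial.natDegree_mul (Polynomial.X_sub_C_ne_zero 1) hRne
    rw [← hR, Polynomial.natDegree_X_sub_C] at this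
    omega
  have hPR : ∫ x in Set.Ioc (0:ℝ) 1, P.eval x * R.eval x = 0 := by
    have e : ∀ x : ℝ, P.eval x * R.eval x
        = ∑ l ∈ Finset.range q, R.coeff l * (P.eval x * x ^ l) := by
      intro x
      rw [show eval x R = ∑ l ∈ Finset.range q, R.coeff l * x ^ l from
        Polynomial.eval_eq_sum_range' hRdeg x, Finset.mul_sum]
      exact Finset.sum_congr rfl fun l _ => by ring
    simp_rw [e]
    rw [integral_finset_sum]
    · exact Finset.sum_eq_zero fun l hl => by
        rw [integral_const_mul, hmom l (Finset.mem_range.mp hl)]; ring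
    · intro l _
      exact (continuous_const.mul (P.continuous.mul (continuous_pow _))).integrableOn_Ioc
  have hpos : 0 < ∫ x in Set.Ioc (0:ℝ) 1, (-(P * R)).eval x := by
    refine poly_int_pos ?_ ?_
    · exact neg_ne_zero.mpr (mul_ne_zero hP hRne)
    · intro x hx
      rw [eval_neg, eval_mul, hR, eval_mul, Polynomial.eval_sub, Polynomial.eval_X,
        Polynomial.eval_C]
      have : (x - 1) * R.eval x * R.eval x = (x - 1) * (R.eval x * R.eval x) := by ring
      rw [this]
      have hx1 : x - 1 ≤ 0 := by linarith [hx.2]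
      nlinarith [mul_self_nonneg (R.eval x)]
  have hzero : ∫ x in Set.Ioc (0:ℝ) 1, (-(P * R)).eval x = 0 := by
    simp_rw [eval_neg, eval_mul]
    rw [integral_neg, hPR, neg_zero]
  exact absurd hzero hpos.ne'


/-- rewrite a combination of scalar polynomials with vector coefficients in monomial form -/
lemma repr_monomial {U : Type v} [AddCommGroup U] [Module ℝ U] {n : ℕ}
    (P : Fin n → Polynomial ℝ) (hdeg : ∀ j, (P j).natDegree < n) (e : Fin n → U) :
    ∃ d : Fin n → U, ∀ x : ℝ,
      ∑ j : Fin n, (P j).eval x • e j = ∑ i : Fin n, x ^ (i : ℕ) • d i := by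
  refine ⟨fun i => ∑ j : Fin n, ((P j).coeff i) • e j, fun x => ?_⟩
  have : ∀ i : Fin n, x ^ (i:ℕ) • ∑ j : Fin n, ((P j).coeff i) • e j
      = ∑ j : Fin n, ((P j).coeff i * x ^ (i:ℕ)) • e j := by
    intro i
    rw [Finset.smul_sum]
    exact Finset.sum_congr rfl fun j _ => by rw [smul_smul, mul_comm]
  simp_rw [this]
  rw [Finset.sum_comm]
  refine Finset.sum_congr rfl fun j _ => ?_
  rw [Polynomial.eval_eq_sum_range' (hdeg j) x, ← Fin.sum_univ_eq_sum_range
    (fun i => (P j).coeff i * x ^ i), Finset.sum_smul]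

/-- Cauchy-Schwarz type bound via AM-GM -/
lemma cs_bound {a b : ℝ} (hab : a < b) {f : ℝ → ℝ} (hfc : Continuous f)
    (hf : ∀ x, 0 ≤ f x) :
    ∫ x in Set.Ioc a b, f x
      ≤ Real.sqrt (b - a) * Real.sqrt (∫ x in Set.Ioc a b, f x ^ 2) := by
  set I := ∫ x in Set.Ioc a b, f x ^ 2 with hI
  have hI0 : 0 ≤ I := setIntegral_nonneg measurableSet_Ioc fun x _ => sq_nonneg _
  have hint1 : IntegrableOn f (Set.Ioc a b) := hfc.integrableOn_Ioc
  have hint2 : IntegrableOn (fun x => f x ^ 2) (Set.Ioc a b) :=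
    (hfc.pow 2).integrableOn_Ioc
  have hba : (0:ℝ) < b - a := by linarith
  rcases eq_or_lt_of_le hI0 with h0 | hpos
  · have hz : (fun x => f x ^ 2) =ᵐ[volume.restrict (Set.Ioc a b)] 0 := by
      refine (integral_eq_zero_iff_of_nonneg_ae ?_ hint2).mp h0.symm
      exact Filter.Eventually.of_forall fun x => sq_nonneg _
    have hz' : f =ᵐ[volume.restrict (Set.Ioc a b)] 0 := by
      filter_upwards [hz] with x hx
      exact pow_eq_zero_iff (n := 2) (by norm_num) |>.mp hx
    rw [MeasureTheory.integral_congr_ae hz']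
    simp only [Pi.zero_apply, integral_zero]
    positivity
  · have hsb : 0 < Real.sqrt (b - a) := Real.sqrt_pos.mpr hba
    have hsI : 0 < Real.sqrt I := Real.sqrt_pos.mpr hpos
    obtain ⟨lam, hlam0, hlam⟩ : ∃ lam : ℝ, 0 < lam ∧ lam * Real.sqrt (b - a) = Real.sqrt I :=
      ⟨Real.sqrt I / Real.sqrt (b - a), div_pos hsI hsb, by field_simp⟩
    have hpt : ∀ x, f x ≤ lam / 2 + f x ^ 2 / (2 * lam) := by
      intro x
      have h1 : 0 ≤ (f x - lam) ^ 2 / (2 * lam) := by positivity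
      have : lam / 2 + f x ^ 2 / (2 * lam) - f x = (f x - lam) ^ 2 / (2 * lam) := by
        field_simp
        ring
      linarith
    have hrhsint : IntegrableOn (fun x => lam / 2 + f x ^ 2 / (2 * lam)) (Set.Ioc a b) := by
      refine (integrableOn_const ?_).add (hint2.div_const _)
      simp [Real.volume_Ioc]
    have step : ∫ x in Set.Ioc a b, f x
        ≤ ∫ x in Set.Ioc a b, (lam / 2 + f x ^ 2 / (2 * lam)) :=
      setIntegral_mono_on hint1 hrhsint measurableSet_Ioc fun x _ => hpt x
    have calcrhs : ∫ x in Set.Ioc a b, (lam / 2 + f x ^ 2 / (2 * lam))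
        = lam / 2 * (b - a) + I / (2 * lam) := by
      rw [integral_add (integrableOn_const (by simp [Real.volume_Ioc]) :
          IntegrableOn (fun _ => lam / 2) (Set.Ioc a b) volume)
        (hint2.div_const (2 * lam) : IntegrableOn (fun x => f x ^ 2 / (2 * lam)) (Set.Ioc a b) volume)]
      rw [setIntegral_const, integral_div]
      rw [Real.volume_real_Ioc_of_le hab.le, smul_eq_mul, ← hI]
      ring
    have final : lam / 2 * (b - a) + I / (2 * lam) = Real.sqrt (b - a) * Real.sqrt I := by
      have hss : Real.sqrt (b - a) * Real.sqrt (b - a) = b - a := Real.mul_self_sqrt hba.le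
      have hII : Real.sqrt I * Real.sqrt I = I := Real.mul_self_sqrt hI0
      have h1 : lam * (b - a) = Real.sqrt I * Real.sqrt (b - a) := by
        linear_combination Real.sqrt (b - a) * hlam - lam * hss
      have h2 : I / lam = Real.sqrt (b - a) * Real.sqrt I := by
        rw [div_eq_iff hlam0.ne']
        linear_combination (-Real.sqrt I) * hlam - hII
      have h3 : I / (2 * lam) = (I / lam) / 2 := by
        rw [div_div]
        ring_nf
      rw [h3, h2]
      nlinarith [h1]
    linarith [step, calcrhs ▸ step]


lemma deg_aux {p : Polynomial ℝ} (hp : p.natDegree ≤ 1) {j n : ℕ} (hj : j ≤ n) :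
    (p ^ j).natDegree < n + 1 := by
  have h1 : (p ^ j).natDegree ≤ j * p.natDegree := Polynomial.natDegree_pow_le
  have h2 : j * p.natDegree ≤ j * 1 := Nat.mul_le_mul_left j hp
  omega

lemma deg1 (α β : ℝ) : (Polynomial.C α * Polynomial.X + Polynomial.C β).natDegree ≤ 1 := by
  refine (Polynomial.natDegree_add_le _ _).trans ?_
  have h1 : (Polynomial.C α * Polynomial.X).natDegree ≤ 1 :=
    (Polynomial.natDegree_C_mul_le _ _).trans (by simp)
  simp only [Polynomial.natDegree_C]
  omega

lemma deg2 (α β : ℝ) : (Polynomial.C α * (Polynomial.X - Polynomial.C β)).natDegree ≤ 1 :=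
  (Polynomial.natDegree_C_mul_le _ _).trans (by simp [Polynomial.natDegree_X_sub_C])

/-- pull a finite sum of scalar-functions-smul-constant-vectors out of a set integral -/
lemma integral_sum_smul {U : Type v} [NormedAddCommGroup U] [NormedSpace ℝ U]
    [CompleteSpace U] {ι : Type} [Fintype ι] (g : ι → ℝ → ℝ) (hg : ∀ j, Continuous (g j))
    (e : ι → U) (a b : ℝ) :
    ∫ x in Set.Ioc a b, ∑ j : ι, g j x • e j
      = ∑ j : ι, (∫ x in Set.Ioc a b, g j x) • e j := by
  rw [integral_finset_sum]
  · exact Finset.sum_congr rfl fun j _ => integral_smul_const _ _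
  · intro j _
    exact ((hg j).smul continuous_const).integrableOn_Ioc

end DCF

/-- **Properties (3.8) (existence and stability of the modified discrete characteristic
function):** there is `c'_q > 0` depending only on `q` such that for every `U`-valued
polynomial `ṽ` of degree ≤ `q` vanishing at `t_n` and every `s ∈ J_n`, there is a `U`-valued
polynomial `v̂` of degree ≤ `q` with `v̂(t_{n+1}) = ṽ(t_{n+1})`, with prescribed moments
`∫_{J_n} v̂ (t-t_n)^l dt = ∫_{t_n}^s ṽ (t-t_n)^l dt` for `l < q`, and satisfying
`‖v̂‖_{L²(J_n;U)} ≤ c'_q ‖ṽ‖_{L²(J_n;U)}`. -/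
theorem discrete_characteristic_function (q : ℕ) (hq : 1 ≤ q) :
    ∃ c : ℝ, 0 < c ∧
      ∀ (U : Type u) [NormedAddCommGroup U] [InnerProductSpace ℝ U] [CompleteSpace U],
      ∀ tn tn1 : ℝ, tn < tn1 →
      ∀ (co : Fin (q + 1) → U) (vt : ℝ → U),
        (∀ x : ℝ, vt x = ∑ j : Fin (q + 1), x ^ (j : ℕ) • co j) →
        vt tn = 0 →
      ∀ s ∈ Set.Ioc tn tn1,
        ∃ (d : Fin (q + 1) → U) (vh : ℝ → U),
          (∀ x : ℝ, vh x = ∑ j : Fin (q + 1), x ^ (j : ℕ) • d j) ∧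
          vh tn1 = vt tn1 ∧
          (∀ l < q, (∫ x in Set.Ioc tn tn1, (x - tn) ^ l • vh x)
            = ∫ x in Set.Ioc tn s, (x - tn) ^ l • vt x) ∧
          Real.sqrt (∫ x in Set.Ioc tn tn1, ‖vh x‖ ^ 2) ≤
            c * Real.sqrt (∫ x in Set.Ioc tn tn1, ‖vt x‖ ^ 2) := by
  classical
  obtain ⟨Ψ, hΨ⟩ := DCF.exists_right_inverse (DCF.Phi_inj q hq)
  obtain ⟨a, ha0⟩ := DCF.exists_solution (DCF.Hmat_inj q) (fun _ => 1)
  have ha : ∀ j : Fin (q+1),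
      ∑ k : Fin (q+1), a k * ((((j:ℕ) + (k:ℕ) + 1 : ℕ) : ℝ))⁻¹ = 1 := by
    intro j
    have h := congrFun ha0 j
    simp only [Matrix.mulVec, dotProduct, DCF.Hmat, Matrix.of_apply] at h
    rw [← h]
    refine Finset.sum_congr rfl fun k _ => ?_
    rw [mul_comm]
    have hnat : ((k:ℕ) + (j:ℕ) + 1 : ℕ) = ((j:ℕ) + (k:ℕ) + 1 : ℕ) := by omega
    rw [hnat]
  set K := ∑ j : Fin (q+1), ∑ m : Fin (q+1), |Ψ j m| with hK
  set Ma := ∑ k : Fin (q+1), |a k| with hMa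
  have hK0 : 0 ≤ K := Finset.sum_nonneg fun j _ => Finset.sum_nonneg fun m _ => abs_nonneg _
  have hMa0 : 0 ≤ Ma := Finset.sum_nonneg fun k _ => abs_nonneg _
  refine ⟨K * (Ma + 1) + 1, by nlinarith, ?_⟩
  intro U _ _ _ tn tn1 htt co vt hvt hv0 s hs
  set τ := tn1 - tn with hτdef
  have hτ : 0 < τ := sub_pos.mpr htt
  have hτne : τ ≠ 0 := hτ.ne'
  set u : ℝ → ℝ := fun x => (x - tn) / τ with hu
  have hu1 : u tn1 = 1 := by
    simp only [hu]
    rw [← hτdef, div_self hτne]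
  have hubd : ∀ x ∈ Set.Ioc tn tn1, 0 < u x ∧ u x ≤ 1 := by
    intro x hx
    constructor
    · exact div_pos (sub_pos.mpr hx.1) hτ
    · rw [div_le_one hτ]
      simp only [hτdef]
      linarith [hx.2]
  have huc : Continuous u := by
    simp only [hu]
    fun_prop
  -- representation of vt in the reference basis
  obtain ⟨c, hcrep⟩ := DCF.repr_monomial
    (fun j : Fin (q+1) => (Polynomial.C τ * Polynomial.X + Polynomial.C tn) ^ (j:ℕ))
    (fun j => DCF.deg_aux (DCF.deg1 τ tn) (Nat.lt_succ_iff.mp j.isLt)) co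
  have hc : ∀ x : ℝ, vt x = ∑ i : Fin (q+1), (u x) ^ (i:ℕ) • c i := by
    intro x
    rw [hvt x, ← hcrep (u x)]
    refine Finset.sum_congr rfl fun j _ => ?_
    congr 1
    rw [Polynomial.eval_pow, Polynomial.eval_add, Polynomial.eval_mul, Polynomial.eval_C,
      Polynomial.eval_X, Polynomial.eval_C]
    congr 1
    simp only [hu]
    field_simp
    ring
  have hstn : tn < s := hs.1
  have hstn1 : s ≤ tn1 := hs.2
  -- data vector b
  set b : Fin (q+1) → U := fun k =>
    if (k:ℕ) = 0 then ∑ j : Fin (q+1), c j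
    else ∑ j : Fin (q+1),
      ((((s - tn)/τ) ^ ((j:ℕ)+(k:ℕ)) / (((j:ℕ)+(k:ℕ) : ℕ) : ℝ)) • c j) with hb
  set e : Fin (q+1) → U := fun j => ∑ m : Fin (q+1), Ψ j m • b m with he
  have hPhie : ∀ k : Fin (q+1), ∑ j : Fin (q+1), DCF.Phi q k j • e j = b k := by
    intro k
    simp only [he, Finset.smul_sum, smul_smul]
    rw [Finset.sum_comm]
    have : ∀ m : Fin (q+1), ∑ j : Fin (q+1), (DCF.Phi q k j * Ψ j m) • b m
        = ((if k = m then (1:ℝ) else 0)) • b m := by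
      intro m
      rw [← Finset.sum_smul, hΨ k m]
    simp_rw [this]
    simp [Finset.sum_ite_eq]
  have hbs : ∀ (l : ℕ) (k : Fin (q+1)), (k:ℕ) = l + 1 →
      (∫ x in Set.Ioc tn s, (x - tn) ^ l • vt x) = τ ^ (l+1) • b k := by
    intro l k hkval
    have hkne : (k:ℕ) ≠ 0 := by omega
    have e1 : (fun x => (x - tn) ^ l • vt x)
        = fun x => ∑ j : Fin (q+1), ((x - tn) ^ l * (u x) ^ (j:ℕ)) • c j := by
      funext x
      rw [hc x, Finset.smul_sum]
      exact Finset.sum_congr rfl fun j _ => by rw [smul_smul]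
    rw [e1, DCF.integral_sum_smul (fun (j : Fin (q+1)) x => (x - tn) ^ l * (u x) ^ (j:ℕ))
      (fun j => ((continuous_sub_right tn).pow l).mul (huc.pow _)) c tn s]
    simp only [hb]
    rw [if_neg hkne]
    rw [Finset.smul_sum]
    refine Finset.sum_congr rfl fun j _ => ?_
    rw [smul_smul]
    congr 1
    simp only [hu]
    rw [DCF.key_int hτne hstn.le l (j:ℕ)]
    have hkj : ((j:ℕ) + (k:ℕ) : ℕ) = l + (j:ℕ) + 1 := by omega
    rw [hkj]
    have hsn0 : 0 < s - tn := sub_pos.mpr hstn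
    push_cast
    rw [div_pow]
    field_simp
    have hτj : τ ^ (j:ℕ) * τ⁻¹ ^ (j:ℕ) = 1 := by rw [← mul_pow, mul_inv_cancel₀ hτne, one_pow]
    linear_combination (τ * τ ^ l) * hτj
  -- the solution polynomial
  obtain ⟨d, hdrep⟩ := DCF.repr_monomial
    (fun j : Fin (q+1) => (Polynomial.C τ⁻¹ * (Polynomial.X - Polynomial.C tn)) ^ (j:ℕ))
    (fun j => DCF.deg_aux (DCF.deg2 τ⁻¹ tn) (Nat.lt_succ_iff.mp j.isLt)) e
  have hvh : ∀ x : ℝ, (∑ i : Fin (q+1), x ^ (i:ℕ) • d i)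
      = ∑ j : Fin (q+1), (u x) ^ (j:ℕ) • e j := by
    intro x
    rw [← hdrep x]
    refine Finset.sum_congr rfl fun j _ => ?_
    congr 1
    rw [Polynomial.eval_pow, Polynomial.eval_mul, Polynomial.eval_C, Polynomial.eval_sub,
      Polynomial.eval_X, Polynomial.eval_C]
    congr 1
    simp only [hu]
    rw [div_eq_inv_mul]
  refine ⟨d, fun x => ∑ i : Fin (q+1), x ^ (i:ℕ) • d i, fun x => rfl, ?_, ?_, ?_⟩
  · -- endpoint condition
    beta_reduce
    rw [hvh tn1, hc tn1, hu1]
    simp only [one_pow, one_smul]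
    have h0 := hPhie 0
    have hPhi0 : ∀ j : Fin (q+1), DCF.Phi q 0 j = 1 := by
      intro j
      simp [DCF.Phi]
    simp only [hPhi0, one_smul] at h0
    rw [h0]
    simp [hb]
  · -- moment conditions
    intro l hl
    beta_reduce
    have hk : l + 1 < q + 1 := by omega
    set k : Fin (q+1) := ⟨l+1, hk⟩ with hkdef
    have hkne : (k:ℕ) ≠ 0 := by simp [hkdef]
    -- LHS
    have hL : (∫ x in Set.Ioc tn tn1, (x - tn) ^ l • ∑ i : Fin (q+1), x ^ (i:ℕ) • d i)
        = τ ^ (l+1) • b k := by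
      have e1 : (fun x => (x - tn) ^ l • ∑ i : Fin (q+1), x ^ (i:ℕ) • d i)
          = fun x => ∑ j : Fin (q+1), ((x - tn) ^ l * (u x) ^ (j:ℕ)) • e j := by
        funext x
        rw [hvh x, Finset.smul_sum]
        exact Finset.sum_congr rfl fun j _ => by rw [smul_smul]
      rw [e1, DCF.integral_sum_smul (fun (j : Fin (q+1)) x => (x - tn) ^ l * (u x) ^ (j:ℕ))
        (fun j => ((continuous_sub_right tn).pow l).mul (huc.pow _)) e tn tn1]
      have e2 : ∀ j : Fin (q+1),
          (∫ x in Set.Ioc tn tn1, (x - tn) ^ l * (u x) ^ (j:ℕ))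
            = τ ^ (l+1) * DCF.Phi q k j := by
        intro j
        simp only [hu]
        rw [DCF.key_int hτne htt.le l (j:ℕ)]
        rw [← hτdef]
        simp only [DCF.Phi, Matrix.of_apply, if_neg hkne]
        have hkj : ((j:ℕ) + (k:ℕ) : ℕ) = l + (j:ℕ) + 1 := by simp [hkdef]; omega
        rw [hkj]
        push_cast
        rw [div_eq_mul_inv]
        field_simp
        have hτj : τ ^ (j:ℕ) * τ⁻¹ ^ (j:ℕ) = 1 := by rw [← mul_pow, mul_inv_cancel₀ hτne, one_pow]
        linear_combination (τ * τ ^ l) * hτj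
      simp_rw [e2]
      rw [← hPhie k, Finset.smul_sum]
      exact Finset.sum_congr rfl fun j _ => by rw [smul_smul]
    exact hL.trans (hbs l k rfl).symm
  · -- stability bound
    beta_reduce
    set N := Real.sqrt (∫ x in Set.Ioc tn tn1, ‖vt x‖ ^ 2) with hN
    have hN0 : 0 ≤ N := Real.sqrt_nonneg _
    have hvtc : Continuous vt := by
      have : vt = fun x => ∑ j : Fin (q+1), x ^ (j:ℕ) • co j := funext hvt
      rw [this]
      exact continuous_finset_sum _ fun j _ => (continuous_pow _).smul continuous_const
    have hCS : ∫ x in Set.Ioc tn tn1, ‖vt x‖ ≤ Real.sqrt τ * N := by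
      have := DCF.cs_bound htt hvtc.norm (fun x => norm_nonneg (vt x))
      rwa [← hτdef] at this
    have hIvt : IntegrableOn (fun x => ‖vt x‖) (Set.Ioc tn tn1) :=
      hvtc.norm.integrableOn_Ioc
    -- bound on the data
    have hsp : 0 < Real.sqrt τ := Real.sqrt_pos.mpr hτ
    have hss : Real.sqrt τ * Real.sqrt τ = τ := Real.mul_self_sqrt hτ.le
    have hbb : ∀ k : Fin (q+1), ‖b k‖ * Real.sqrt τ ≤ (Ma + 1) * N := by
      intro k
      by_cases hk0 : (k:ℕ) = 0
      · -- endpoint data entry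
        have hbk : b k = vt tn1 := by
          simp only [hb]
          rw [if_pos hk0, hc tn1, hu1]
          simp
        set g : ℝ → ℝ := fun x => ∑ m : Fin (q+1), a m * (u x) ^ (m:ℕ) with hg
        have hgc : Continuous g :=
          continuous_finset_sum _ fun m _ => continuous_const.mul (huc.pow _)
        have hgbd : ∀ x ∈ Set.Ioc tn tn1, |g x| ≤ Ma := by
          intro x hx
          refine (Finset.abs_sum_le_sum_abs _ _).trans ?_
          rw [hMa]
          refine Finset.sum_le_sum fun m _ => ?_
          rw [abs_mul]
          have h1 : |(u x) ^ (m:ℕ)| ≤ 1 := by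
            rw [abs_pow]
            refine pow_le_one₀ (abs_nonneg _) ?_
            rw [abs_le]
            obtain ⟨h2, h3⟩ := hubd x hx
            exact ⟨by linarith, h3⟩
          calc |a m| * |(u x) ^ (m:ℕ)| ≤ |a m| * 1 :=
                mul_le_mul_of_nonneg_left h1 (abs_nonneg _)
            _ = |a m| := mul_one _
        have hrep : (∫ x in Set.Ioc tn tn1, g x • vt x) = τ • vt tn1 := by
          have e1 : (fun x => g x • vt x) = fun x =>
              ∑ p : Fin (q+1) × Fin (q+1),
                (a p.1 * ((x - tn) ^ 0 * (u x) ^ ((p.1:ℕ)+(p.2:ℕ)))) • c p.2 := by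
            funext x
            rw [hc x]
            simp only [hg]
            simp only [Fintype.sum_prod_type]
            rw [Finset.sum_smul]
            refine Finset.sum_congr rfl fun m _ => ?_
            rw [Finset.smul_sum]
            refine Finset.sum_congr rfl fun i _ => ?_
            rw [smul_smul]
            congr 1
            rw [pow_zero, one_mul, pow_add]
            ring
          rw [e1, DCF.integral_sum_smul
            (fun (p : Fin (q+1) × Fin (q+1)) x =>
              a p.1 * ((x - tn) ^ 0 * (u x) ^ ((p.1:ℕ)+(p.2:ℕ))))
            (fun p => continuous_const.mul (((continuous_sub_right tn).pow 0).mul (huc.pow _)))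
            (fun p => c p.2) tn tn1]
          have e2 : ∀ p : Fin (q+1) × Fin (q+1),
              (∫ x in Set.Ioc tn tn1, a p.1 * ((x - tn) ^ 0 * (u x) ^ ((p.1:ℕ)+(p.2:ℕ))))
                = τ * (a p.1 * ((((p.2:ℕ) + (p.1:ℕ) + 1 : ℕ) : ℝ))⁻¹) := by
            intro p
            rw [integral_const_mul]
            simp only [hu]
            rw [DCF.key_int hτne htt.le 0 ((p.1:ℕ)+(p.2:ℕ)), ← hτdef]
            have hexp : 0 + ((p.1:ℕ)+(p.2:ℕ)) + 1 = ((p.1:ℕ)+(p.2:ℕ)) + 1 := by omega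
            rw [hexp]
            have hD : (((p.1:ℕ)):ℝ) + ((p.2:ℕ):ℝ) + 1 ≠ 0 := by positivity
            rw [pow_succ, inv_pow]
            push_cast
            field_simp
            ring
          simp_rw [e2]
          rw [hc tn1, hu1]
          simp only [one_pow, one_smul]
          rw [Finset.smul_sum]
          simp only [Fintype.sum_prod_type]
          rw [Finset.sum_comm]
          refine Finset.sum_congr rfl fun i _ => ?_
          rw [← Finset.sum_smul]
          congr 1
          rw [← Finset.mul_sum, ha i, mul_one]
        have hnormint : ‖∫ x in Set.Ioc tn tn1, g x • vt x‖ ≤ Ma * (Real.sqrt τ * N) := by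
          refine (norm_integral_le_integral_norm _).trans ?_
          calc ∫ x in Set.Ioc tn tn1, ‖g x • vt x‖
              ≤ ∫ x in Set.Ioc tn tn1, Ma * ‖vt x‖ := by
                refine setIntegral_mono_on ((hgc.smul hvtc).norm.integrableOn_Ioc)
                  (hIvt.const_mul _) measurableSet_Ioc fun x hx => ?_
                rw [norm_smul, Real.norm_eq_abs]
                exact mul_le_mul_of_nonneg_right (hgbd x hx) (norm_nonneg _)
            _ = Ma * ∫ x in Set.Ioc tn tn1, ‖vt x‖ := integral_const_mul _ _
            _ ≤ Ma * (Real.sqrt τ * N) := mul_le_mul_of_nonneg_left hCS hMa0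
        have hbkn : τ * ‖b k‖ ≤ Ma * (Real.sqrt τ * N) := by
          rw [hbk]
          calc τ * ‖vt tn1‖ = ‖τ • vt tn1‖ := by
                rw [norm_smul, Real.norm_eq_abs, abs_of_pos hτ]
            _ = ‖∫ x in Set.Ioc tn tn1, g x • vt x‖ := by rw [hrep]
            _ ≤ Ma * (Real.sqrt τ * N) := hnormint
        have key : ‖b k‖ * Real.sqrt τ ≤ Ma * N := by
          have h4 : Real.sqrt τ * (‖b k‖ * Real.sqrt τ) ≤ Real.sqrt τ * (Ma * N) := by
            have h5 : Real.sqrt τ * (‖b k‖ * Real.sqrt τ) = τ * ‖b k‖ := by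
              linear_combination ‖b k‖ * hss
            rw [h5]
            calc τ * ‖b k‖ ≤ Ma * (Real.sqrt τ * N) := hbkn
              _ = Real.sqrt τ * (Ma * N) := by ring
          exact le_of_mul_le_mul_left h4 hsp
        have h3 : Ma * N ≤ (Ma + 1) * N :=
          mul_le_mul_of_nonneg_right (le_add_of_nonneg_right zero_le_one) hN0
        exact key.trans h3
      · -- moment data entries
        have hkq : (k:ℕ) ≤ q := Nat.lt_succ_iff.mp k.isLt
        have hkval : (k:ℕ) = ((k:ℕ) - 1) + 1 := by omega
        set l := (k:ℕ) - 1 with hldef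
        have hmom := hbs l k hkval
        have hnsm : τ ^ (l+1) * ‖b k‖ = ‖(∫ x in Set.Ioc tn s, (x - tn) ^ l • vt x)‖ := by
          rw [hmom, norm_smul, Real.norm_eq_abs, abs_of_pos (pow_pos hτ _)]
        have hIsub : IntegrableOn (fun x => ‖vt x‖) (Set.Ioc tn s) :=
          hIvt.mono_set (Set.Ioc_subset_Ioc_right hstn1)
        have hbound : ‖(∫ x in Set.Ioc tn s, (x - tn) ^ l • vt x)‖
            ≤ τ ^ l * (Real.sqrt τ * N) := by
          refine (norm_integral_le_integral_norm _).trans ?_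
          calc ∫ x in Set.Ioc tn s, ‖(x - tn) ^ l • vt x‖
              ≤ ∫ x in Set.Ioc tn s, τ ^ l * ‖vt x‖ := by
                refine setIntegral_mono_on
                  ((((continuous_sub_right tn).pow l).smul hvtc).norm.integrableOn_Ioc)
                  (hIsub.const_mul _) measurableSet_Ioc fun x hx => ?_
                rw [norm_smul, Real.norm_eq_abs, abs_pow,
                  abs_of_nonneg (by linarith [hx.1] : (0:ℝ) ≤ x - tn)]
                refine mul_le_mul_of_nonneg_right ?_ (norm_nonneg _)
                refine pow_le_pow_left₀ (by linarith [hx.1]) ?_ l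
                rw [hτdef]
                linarith [hx.2, hstn1]
            _ ≤ ∫ x in Set.Ioc tn tn1, τ ^ l * ‖vt x‖ := by
                refine setIntegral_mono_set (hIvt.const_mul _) ?_ ?_
                · filter_upwards with x using
                    mul_nonneg (pow_nonneg hτ.le _) (norm_nonneg _)
                · exact HasSubset.Subset.eventuallyLE (Set.Ioc_subset_Ioc_right hstn1)
            _ = τ ^ l * ∫ x in Set.Ioc tn tn1, ‖vt x‖ := integral_const_mul _ _
            _ ≤ τ ^ l * (Real.sqrt τ * N) := mul_le_mul_of_nonneg_left hCS (pow_nonneg hτ.le _)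
        have hmain : τ * ‖b k‖ ≤ Real.sqrt τ * N := by
          have h2 : τ ^ l * (τ * ‖b k‖) ≤ τ ^ l * (Real.sqrt τ * N) := by
            calc τ ^ l * (τ * ‖b k‖) = τ ^ (l+1) * ‖b k‖ := by rw [pow_succ]; ring
              _ = ‖(∫ x in Set.Ioc tn s, (x - tn) ^ l • vt x)‖ := hnsm
              _ ≤ τ ^ l * (Real.sqrt τ * N) := hbound
          exact le_of_mul_le_mul_left h2 (pow_pos hτ l)
        have key : ‖b k‖ * Real.sqrt τ ≤ N := by
          have h4 : Real.sqrt τ * (‖b k‖ * Real.sqrt τ) ≤ Real.sqrt τ * N := by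
            have h5 : Real.sqrt τ * (‖b k‖ * Real.sqrt τ) = τ * ‖b k‖ := by
              linear_combination ‖b k‖ * hss
            rw [h5]
            exact hmain
          exact le_of_mul_le_mul_left h4 hsp
        have h3 : N ≤ (Ma + 1) * N :=
          le_mul_of_one_le_left hN0 (le_add_of_nonneg_left hMa0)
        exact key.trans h3
    -- bound on e
    have heb : Real.sqrt τ * (∑ j : Fin (q+1), ‖e j‖) ≤ K * ((Ma + 1) * N) := by
      calc Real.sqrt τ * (∑ j : Fin (q+1), ‖e j‖)
          ≤ Real.sqrt τ * (∑ j : Fin (q+1), ∑ m : Fin (q+1), |Ψ j m| * ‖b m‖) := by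
            refine mul_le_mul_of_nonneg_left ?_ (Real.sqrt_nonneg _)
            refine Finset.sum_le_sum fun j _ => ?_
            simp only [he]
            refine (norm_sum_le _ _).trans ?_
            refine Finset.sum_le_sum fun m _ => ?_
            rw [norm_smul, Real.norm_eq_abs]
        _ = ∑ j : Fin (q+1), ∑ m : Fin (q+1), |Ψ j m| * (‖b m‖ * Real.sqrt τ) := by
            rw [Finset.mul_sum]
            refine Finset.sum_congr rfl fun j _ => ?_
            rw [Finset.mul_sum]
            refine Finset.sum_congr rfl fun m _ => by ring
        _ ≤ ∑ j : Fin (q+1), ∑ m : Fin (q+1), |Ψ j m| * ((Ma + 1) * N) := by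
            refine Finset.sum_le_sum fun j _ => Finset.sum_le_sum fun m _ => ?_
            exact mul_le_mul_of_nonneg_left (hbb m) (abs_nonneg _)
        _ = K * ((Ma + 1) * N) := by
            rw [hK, Finset.sum_mul]
            refine Finset.sum_congr rfl fun j _ => ?_
            rw [Finset.sum_mul]
    set E := ∑ j : Fin (q+1), ‖e j‖ with hE
    have hE0 : 0 ≤ E := Finset.sum_nonneg fun j _ => norm_nonneg _
    have hvhb : ∀ x ∈ Set.Ioc tn tn1, ‖∑ i : Fin (q+1), x ^ (i:ℕ) • d i‖ ≤ E := by
      intro x hx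
      rw [hvh x]
      refine (norm_sum_le _ _).trans ?_
      refine Finset.sum_le_sum fun j _ => ?_
      rw [norm_smul, Real.norm_eq_abs]
      have h1 : |(u x) ^ (j:ℕ)| ≤ 1 := by
        rw [abs_pow]
        refine pow_le_one₀ (abs_nonneg _) ?_
        rw [abs_le]
        obtain ⟨h2, h3⟩ := hubd x hx
        constructor <;> linarith
      calc |(u x) ^ (j:ℕ)| * ‖e j‖ ≤ 1 * ‖e j‖ :=
            mul_le_mul_of_nonneg_right h1 (norm_nonneg _)
        _ = ‖e j‖ := one_mul _
    have hIvh : IntegrableOn (fun x => ‖∑ i : Fin (q+1), x ^ (i:ℕ) • d i‖ ^ 2)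
        (Set.Ioc tn tn1) := by
      have : Continuous fun x : ℝ => ∑ i : Fin (q+1), x ^ (i:ℕ) • d i :=
        continuous_finset_sum _ fun j _ => (continuous_pow _).smul continuous_const
      exact (this.norm.pow 2).integrableOn_Ioc
    have hsq : (∫ x in Set.Ioc tn tn1, ‖∑ i : Fin (q+1), x ^ (i:ℕ) • d i‖ ^ 2) ≤ τ * E ^ 2 := by
      calc (∫ x in Set.Ioc tn tn1, ‖∑ i : Fin (q+1), x ^ (i:ℕ) • d i‖ ^ 2)
          ≤ ∫ _x in Set.Ioc tn tn1, E ^ 2 := by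
            refine setIntegral_mono_on hIvh (integrableOn_const (by
              simp [Real.volume_Ioc])) measurableSet_Ioc fun x hx => ?_
            exact pow_le_pow_left₀ (norm_nonneg _) (hvhb x hx) 2
        _ = τ * E ^ 2 := by
            rw [setIntegral_const, Real.volume_real_Ioc_of_le htt.le, ← hτdef,
              smul_eq_mul]
    calc Real.sqrt (∫ x in Set.Ioc tn tn1, ‖∑ i : Fin (q+1), x ^ (i:ℕ) • d i‖ ^ 2)
        ≤ Real.sqrt (τ * E ^ 2) := Real.sqrt_le_sqrt hsq
      _ = Real.sqrt τ * E := by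
          rw [Real.sqrt_mul hτ.le, Real.sqrt_sq hE0]
      _ ≤ K * ((Ma + 1) * N) := by linarith [heb]
      _ ≤ (K * (Ma + 1) + 1) * N := by nlinarith
end

section
/- Pointwise bound for the projection π_n (key inequality in Step 2 of the proof of Lemma 3.1): there exists a constant C_q > 0 depending only on q such that for every v ∈ L²(J_n; V) and every s ∈ J_n, ‖(π_n v)(s)‖_U² ≤ (C_q / τ_n) ‖v‖_{L²(J_n;U)} ‖π_n v‖_{L²(J_n;U)}, both for U = V and for U = H. -/
open MeasureTheory Matrix Polynomial

lemma momentMatrix_posDef (q : ℕ) :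
    Matrix.PosDef (Matrix.of fun l j : Fin q => ((l : ℝ) + (j : ℝ) + 2)⁻¹) := by
  refine Matrix.posDef_iff_dotProduct_mulVec.mpr ⟨?_, ?_⟩
  · ext l j
    simp only [Matrix.conjTranspose_apply, Matrix.of_apply, star_trivial]
    ring_nf
  · intro x hx
    have key : dotProduct (star x)
        (Matrix.mulVec (Matrix.of fun l j : Fin q => ((l : ℝ) + (j : ℝ) + 2)⁻¹) x)
        = ∫ t in (0:ℝ)..1, t * (∑ j : Fin q, x j * t ^ (j : ℕ)) ^ 2 := by
      have hexp : ∀ t : ℝ, t * (∑ j : Fin q, x j * t ^ (j : ℕ)) ^ 2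
          = ∑ l : Fin q, ∑ j : Fin q, (x l * x j) * t ^ ((l : ℕ) + (j : ℕ) + 1) := by
        intro t
        rw [sq, Finset.sum_mul_sum, Finset.mul_sum]
        refine Finset.sum_congr rfl fun l _ => ?_
        rw [Finset.mul_sum]
        exact Finset.sum_congr rfl fun j _ => by ring
      simp only [hexp]
      rw [intervalIntegral.integral_finset_sum]
      · refine Eq.symm (Finset.sum_congr rfl fun l _ => ?_)
        rw [intervalIntegral.integral_finset_sum]
        · simp only [dotProduct, Matrix.mulVec, Matrix.of_apply, star_trivial,
            Finset.mul_sum]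
          refine Finset.sum_congr rfl fun i _ => ?_
          rw [intervalIntegral.integral_const_mul, integral_pow]
          push_cast
          have h2 : ((l:ℝ) + (i:ℝ) + 1 + 1) ≠ 0 := by positivity
          field_simp
          ring
        · intro j _
          exact (Continuous.intervalIntegrable (by fun_prop) _ _)
      · intro l _
        exact (Continuous.intervalIntegrable (by fun_prop) _ _)
    rw [key]
    set f : ℝ → ℝ := fun t => t * (∑ j : Fin q, x j * t ^ (j : ℕ)) ^ 2 with hf
    set P : Polynomial ℝ := ∑ j : Fin q, Polynomial.C (x j) * Polynomial.X ^ (j : ℕ) with hPdef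
    have hPeval : ∀ t : ℝ, P.eval t = ∑ j : Fin q, x j * t ^ (j : ℕ) := by
      intro t
      simp [hPdef, Polynomial.eval_finset_sum]
    have hPcoeff : ∀ k : Fin q, P.coeff (k : ℕ) = x k := by
      intro k
      simp [hPdef, Polynomial.finset_sum_coeff, Polynomial.coeff_C_mul, Polynomial.coeff_X_pow,
        mul_ite, Fin.val_eq_val]
    have hPne : P ≠ 0 := by
      intro h
      apply hx
      funext k
      have := hPcoeff k
      rw [h] at this
      simpa using this.symm
    have hfin : {t : ℝ | P.IsRoot t}.Finite := by
      by_contra h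
      exact hPne (P.eq_zero_of_infinite_isRoot h)
    have hint : IntervalIntegrable f volume 0 1 :=
      Continuous.intervalIntegrable (by fun_prop) _ _
    have hae : 0 ≤ᵐ[volume.restrict (Set.uIoc (0:ℝ) 1)] f := by
      rw [Set.uIoc_of_le (zero_le_one)]
      refine (ae_restrict_iff' measurableSet_Ioc).2 (Filter.Eventually.of_forall fun t ht => ?_)
      exact mul_nonneg ht.1.le (sq_nonneg _)
    refine (intervalIntegral.integral_pos_iff_support_of_nonneg_ae' hae hint).2
      ⟨zero_lt_one, ?_⟩
    have hsub : Set.Ioo (0:ℝ) 1 \ {t | P.IsRoot t} ⊆ Function.support f ∩ Set.Ioc 0 1 := by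
      rintro t ⟨ht, hroot⟩
      refine ⟨?_, ht.1, ht.2.le⟩
      have hQ : (∑ j : Fin q, x j * t ^ (j : ℕ)) ≠ 0 := by
        rw [← hPeval]
        exact hroot
      exact mul_ne_zero ht.1.ne' (pow_ne_zero _ hQ)
    calc (0:ENNReal) < volume (Set.Ioo (0:ℝ) 1) := by simp
      _ = volume (Set.Ioo (0:ℝ) 1 \ {t | P.IsRoot t}) :=
          (measure_diff_null (hfin.measure_zero volume)).symm
      _ ≤ volume (Function.support f ∩ Set.Ioc 0 1) := measure_mono hsub

lemma vec_recovery {V : Type*} [AddCommGroup V] [Module ℝ V] {q : ℕ}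
    {A : Matrix (Fin q) (Fin q) ℝ} (hA : A⁻¹ * A = 1) (b m : Fin q → V)
    (h : ∀ l, m l = ∑ j, (A l j) • b j) :
    ∀ k, b k = ∑ l, (A⁻¹ k l) • m l := by
  intro k
  have : ∑ l, (A⁻¹ k l) • m l = ∑ j, ((A⁻¹ * A) k j) • b j := by
    simp only [h, Finset.smul_sum, smul_smul, Matrix.mul_apply]
    rw [Finset.sum_comm]
    exact Finset.sum_congr rfl fun j _ => (Finset.sum_smul).symm
  rw [this, hA]
  simp [Matrix.one_apply, ite_smul]

lemma poly_shift {V : Type*} [AddCommGroup V] [Module ℝ V] (n : ℕ) (c : Fin (n+1) → V) (tn : ℝ) :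
    ∃ d : Fin (n+1) → V, ∀ x : ℝ, ∑ j : Fin (n+1), x ^ (j:ℕ) • c j
      = ∑ k : Fin (n+1), (x - tn) ^ (k:ℕ) • d k := by
  refine ⟨fun k => ∑ j : Fin (n+1),
    (if (k:ℕ) ≤ (j:ℕ) then tn ^ ((j:ℕ) - (k:ℕ)) * ((j:ℕ).choose (k:ℕ) : ℝ) else 0) • c j,
    fun x => ?_⟩
  have hswap : ∀ (g : ℕ → ℝ) (jv : ℕ), jv < n+1 →
      ∑ k ∈ Finset.range (jv+1), g k = ∑ k : Fin (n+1), if (k:ℕ) ≤ jv then g (k:ℕ) else 0 := by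
    intro g jv hj
    rw [Fin.sum_univ_eq_sum_range (fun k => if k ≤ jv then g k else 0) (n+1),
      ← Finset.sum_filter]
    congr 1
    ext k
    simp only [Finset.mem_filter, Finset.mem_range]
    omega
  have hx : ∀ j : Fin (n+1), x ^ (j:ℕ)
      = ∑ k : Fin (n+1), if (k:ℕ) ≤ (j:ℕ) then
          (x - tn) ^ (k:ℕ) * (tn ^ ((j:ℕ) - (k:ℕ)) * ((j:ℕ).choose (k:ℕ) : ℝ)) else 0 := by
    intro j
    have := add_pow (x - tn) tn (j:ℕ)
    rw [sub_add_cancel] at this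
    rw [this, hswap _ (j:ℕ) j.isLt]
    exact Finset.sum_congr rfl fun k _ => by split <;> ring
  calc ∑ j : Fin (n+1), x ^ (j:ℕ) • c j
      = ∑ j : Fin (n+1), ∑ k : Fin (n+1),
          (if (k:ℕ) ≤ (j:ℕ) then (x - tn) ^ (k:ℕ) *
            (tn ^ ((j:ℕ) - (k:ℕ)) * ((j:ℕ).choose (k:ℕ) : ℝ)) else 0) • c j := by
        refine Finset.sum_congr rfl fun j _ => ?_
        rw [hx j, Finset.sum_smul]
    _ = ∑ k : Fin (n+1), (x - tn) ^ (k:ℕ) • ∑ j : Fin (n+1),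
          (if (k:ℕ) ≤ (j:ℕ) then tn ^ ((j:ℕ) - (k:ℕ)) * ((j:ℕ).choose (k:ℕ) : ℝ) else 0) • c j := by
        rw [Finset.sum_comm]
        refine Finset.sum_congr rfl fun k _ => ?_
        rw [Finset.smul_sum]
        refine Finset.sum_congr rfl fun j _ => ?_
        rw [smul_smul]
        congr 1
        split <;> simp

lemma memLp_of_continuous {E : Type*} [NormedAddCommGroup E] {f : ℝ → E} (hf : Continuous f)
    (a b : ℝ) (r : ENNReal) : MemLp f r (volume.restrict (Set.Ioc a b)) := by
  haveI : IsFiniteMeasure (volume.restrict (Set.Ioc a b)) :=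
    ⟨by rw [Measure.restrict_apply_univ]; exact measure_Ioc_lt_top⟩
  obtain ⟨C, hC⟩ := (isCompact_Icc (a := a) (b := b)).exists_bound_of_continuousOn
    hf.continuousOn
  refine MemLp.of_bound hf.aestronglyMeasurable C ?_
  exact (ae_restrict_iff' measurableSet_Ioc).2
    (Filter.Eventually.of_forall fun x hx => hC x ⟨hx.1.le, hx.2⟩)

lemma cs_bound {E : Type*} [NormedAddCommGroup E] [NormedSpace ℝ E] {μ : Measure ℝ}
    {g : ℝ → ℝ} {f : ℝ → E} (hg : MemLp g 2 μ) (hf : MemLp f 2 μ) :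
    ‖∫ x, g x • f x ∂μ‖ ≤ Real.sqrt (∫ x, g x ^ 2 ∂μ) * Real.sqrt (∫ x, ‖f x‖ ^ 2 ∂μ) := by
  have h2 : ENNReal.ofReal (2:ℝ) = 2 := by norm_num
  have hpq : Real.HolderConjugate 2 2 := Real.holderConjugate_iff.mpr ⟨one_lt_two, by norm_num⟩
  have key := integral_mul_norm_le_Lp_mul_Lq (μ := μ) hpq
    (f := g) (g := fun x => ‖f x‖) (by rw [h2]; exact hg) (by rw [h2]; exact hf.norm)
  calc ‖∫ x, g x • f x ∂μ‖ ≤ ∫ x, ‖g x • f x‖ ∂μ := norm_integral_le_integral_norm _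
    _ = ∫ x, ‖g x‖ * ‖(fun x => ‖f x‖) x‖ ∂μ := by simp [norm_smul]
    _ ≤ (∫ x, ‖g x‖ ^ (2:ℝ) ∂μ) ^ (1/(2:ℝ)) * (∫ x, ‖(fun x => ‖f x‖) x‖ ^ (2:ℝ) ∂μ) ^ (1/(2:ℝ)) :=
        key
    _ = Real.sqrt (∫ x, g x ^ 2 ∂μ) * Real.sqrt (∫ x, ‖f x‖ ^ 2 ∂μ) := by
        rw [← Real.sqrt_eq_rpow, ← Real.sqrt_eq_rpow]
        congr 1 <;> congr 1
        · refine integral_congr_ae (Filter.Eventually.of_forall fun x => ?_)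
          show ‖g x‖ ^ (2:ℝ) = g x ^ 2
          rw [show ((2:ℝ) = ((2:ℕ):ℝ)) by norm_num, Real.rpow_natCast, Real.norm_eq_abs, sq_abs]
        · refine integral_congr_ae (Filter.Eventually.of_forall fun x => ?_)
          show ‖‖f x‖‖ ^ (2:ℝ) = ‖f x‖ ^ 2
          rw [show ((2:ℝ) = ((2:ℕ):ℝ)) by norm_num, Real.rpow_natCast, norm_norm]

lemma moment_eq {V : Type*} [NormedAddCommGroup V] [NormedSpace ℝ V] [CompleteSpace V] {q : ℕ}
    (a : Fin q → V) (tn tn1 : ℝ) (h : tn < tn1) (l : ℕ) :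
    ∫ x in Set.Ioc tn tn1, (x - tn) ^ l • (∑ j : Fin q, (x - tn) ^ ((j:ℕ)+1) • a j)
      = ∑ j : Fin q, ((tn1 - tn) ^ (l + (j:ℕ) + 2) / ((l:ℝ) + (j:ℝ) + 2)) • a j := by
  have hrw : ∀ x : ℝ, (x - tn) ^ l • (∑ j : Fin q, (x - tn) ^ ((j:ℕ)+1) • a j)
      = ∑ j : Fin q, ((x - tn) ^ (l + (j:ℕ) + 1)) • a j := by
    intro x
    rw [Finset.smul_sum]
    refine Finset.sum_congr rfl fun j _ => ?_
    rw [smul_smul, ← pow_add, show l + ((j:ℕ)+1) = l + (j:ℕ) + 1 from by omega]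
  simp only [hrw]
  rw [integral_finset_sum _ (fun j _ => ?_)]
  · refine Finset.sum_congr rfl fun j _ => ?_
    rw [integral_smul_const]
    congr 1
    rw [← intervalIntegral.integral_of_le h.le,
      intervalIntegral.integral_comp_sub_right (fun t => t ^ (l + (j:ℕ) + 1)) tn,
      sub_self, integral_pow]
    push_cast
    rw [zero_pow (by omega)]
    ring_nf
  · exact (Continuous.integrableOn_Ioc (by fun_prop))

lemma weight_bound {E : Type*} [NormedAddCommGroup E] [NormedSpace ℝ E] {tn tn1 : ℝ}
    (h : tn < tn1) (l : ℕ) {f : ℝ → E} (hf : MemLp f 2 (volume.restrict (Set.Ioc tn tn1))) :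
    ‖∫ x in Set.Ioc tn tn1, (x - tn) ^ l • f x‖
      ≤ (tn1 - tn) ^ l * Real.sqrt (tn1 - tn)
        * Real.sqrt (∫ x in Set.Ioc tn tn1, ‖f x‖ ^ 2) := by
  have hτ : (0:ℝ) < tn1 - tn := sub_pos.2 h
  have hg : MemLp (fun x => (x - tn) ^ l) 2 (volume.restrict (Set.Ioc tn tn1)) :=
    memLp_of_continuous (by fun_prop) _ _ _
  refine (cs_bound hg hf).trans ?_
  refine mul_le_mul_of_nonneg_right ?_ (Real.sqrt_nonneg _)
  have hI : (∫ x in Set.Ioc tn tn1, ((x - tn) ^ l) ^ 2)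
      = (tn1 - tn) ^ (2 * l + 1) / ((2 * l + 1 : ℕ) : ℝ) := by
    have hpt : ∀ x : ℝ, ((x - tn) ^ l) ^ 2 = (x - tn) ^ (2 * l) := fun x => by
      rw [← pow_mul]; ring_nf
    simp only [hpt]
    rw [← intervalIntegral.integral_of_le h.le,
      intervalIntegral.integral_comp_sub_right (fun t => t ^ (2 * l)) tn, sub_self,
      integral_pow, zero_pow (by omega)]
    push_cast
    ring
  rw [hI]
  calc Real.sqrt ((tn1 - tn) ^ (2 * l + 1) / ((2 * l + 1 : ℕ) : ℝ))
      ≤ Real.sqrt ((tn1 - tn) ^ (2 * l + 1)) := by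
        apply Real.sqrt_le_sqrt
        apply div_le_self (by positivity)
        exact_mod_cast Nat.one_le_iff_ne_zero.2 (by omega)
    _ = (tn1 - tn) ^ l * Real.sqrt (tn1 - tn) := by
        rw [show (tn1 - tn) ^ (2 * l + 1) = ((tn1 - tn) ^ l) ^ 2 * (tn1 - tn) from by ring,
          Real.sqrt_mul (sq_nonneg _), Real.sqrt_sq (by positivity)]

universe v

lemma key_bound (q : ℕ) :
    ∃ C : ℝ, 0 < C ∧
      ∀ (V : Type v) [NormedAddCommGroup V] [NormedSpace ℝ V] [CompleteSpace V],
      ∀ tn tn1 : ℝ, tn < tn1 →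
      ∀ v : ℝ → V, MemLp v 2 (volume.restrict (Set.Ioc tn tn1)) →
      ∀ (a : Fin q → V) (p : ℝ → V),
        (∀ x : ℝ, p x = ∑ j : Fin q, (x - tn) ^ ((j:ℕ)+1) • a j) →
        (∀ l, l < q → (∫ x in Set.Ioc tn tn1, (x - tn) ^ l • v x)
            = ∫ x in Set.Ioc tn tn1, (x - tn) ^ l • p x) →
      ∀ s ∈ Set.Ioc tn tn1,
        ‖p s‖ ^ 2 ≤ C / (tn1 - tn) *
            (Real.sqrt (∫ x in Set.Ioc tn tn1, ‖v x‖ ^ 2) *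
              Real.sqrt (∫ x in Set.Ioc tn tn1, ‖p x‖ ^ 2)) := by
  classical
  set A : Matrix (Fin q) (Fin q) ℝ := Matrix.of fun l j : Fin q => ((l : ℝ) + (j : ℝ) + 2)⁻¹
    with hAdef
  have hA : A⁻¹ * A = 1 := Matrix.nonsing_inv_mul A (momentMatrix_posDef q).det_pos.ne'.isUnit
  set K : ℝ := ∑ j : Fin q, ∑ l : Fin q, |A⁻¹ j l| with hKdef
  have hK0 : 0 ≤ K := Finset.sum_nonneg fun j _ => Finset.sum_nonneg fun l _ => abs_nonneg _
  refine ⟨(K + 1) ^ 2, by positivity, ?_⟩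
  intro V _ _ _ tn tn1 htn v hv a p hp hortho s hs
  have hτ : (0:ℝ) < tn1 - tn := sub_pos.2 htn
  set τ : ℝ := tn1 - tn with hτdef
  set X : ℝ := Real.sqrt (∫ x in Set.Ioc tn tn1, ‖v x‖ ^ 2) with hXdef
  set Y : ℝ := Real.sqrt (∫ x in Set.Ioc tn tn1, ‖p x‖ ^ 2) with hYdef
  have hX0 : 0 ≤ X := Real.sqrt_nonneg _
  have hY0 : 0 ≤ Y := Real.sqrt_nonneg _
  have hpcont : Continuous p := by
    have : p = fun x => ∑ j : Fin q, (x - tn) ^ ((j:ℕ)+1) • a j := funext hp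
    rw [this]
    fun_prop
  have hpmem : MemLp p 2 (volume.restrict (Set.Ioc tn tn1)) :=
    memLp_of_continuous hpcont _ _ _
  set b : Fin q → V := fun j => τ ^ ((j:ℕ)+1) • a j with hbdef
  set m : Fin q → V := fun l =>
    (τ ^ ((l:ℕ)+1))⁻¹ • ∫ x in Set.Ioc tn tn1, (x - tn) ^ (l:ℕ) • p x with hmdef
  -- each m l is an A-combination of the b's
  have h_m_eq : ∀ l : Fin q, m l = ∑ j : Fin q, A l j • b j := by
    intro l
    have : (∫ x in Set.Ioc tn tn1, (x - tn) ^ (l:ℕ) • p x)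
        = ∑ j : Fin q, (τ ^ ((l:ℕ) + (j:ℕ) + 2) / ((l:ℝ) + (j:ℝ) + 2)) • a j := by
      simp only [hp]
      exact moment_eq a tn tn1 htn (l:ℕ)
    rw [hmdef]
    simp only [this, Finset.smul_sum, smul_smul]
    refine Finset.sum_congr rfl fun j _ => ?_
    rw [hbdef]
    simp only [smul_smul]
    congr 1
    rw [hAdef]
    simp only [Matrix.of_apply]
    rw [show (l:ℕ) + (j:ℕ) + 2 = ((l:ℕ)+1) + ((j:ℕ)+1) from by omega, pow_add]
    have h1 : (τ : ℝ) ^ ((l:ℕ)+1) ≠ 0 := by positivity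
    have h2 : ((l:ℝ) + (j:ℝ) + 2) ≠ 0 := by positivity
    rw [pow_add]
    field_simp
    ring
  have h_b_eq : ∀ k, b k = ∑ l, (A⁻¹ k l) • m l := vec_recovery hA b m h_m_eq
  -- norm bounds on the m l
  have hm_bound : ∀ (l : Fin q) (Z : ℝ), 0 ≤ Z →
      ‖∫ x in Set.Ioc tn tn1, (x - tn) ^ (l:ℕ) • p x‖ ≤ τ ^ (l:ℕ) * Real.sqrt τ * Z →
      ‖m l‖ ≤ Real.sqrt τ / τ * Z := by
    intro l Z hZ hI
    rw [hmdef]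
    simp only [norm_smul, norm_inv, norm_pow, Real.norm_eq_abs, abs_of_pos hτ]
    calc (τ ^ ((l:ℕ)+1))⁻¹ * ‖∫ x in Set.Ioc tn tn1, (x - tn) ^ (l:ℕ) • p x‖
        ≤ (τ ^ ((l:ℕ)+1))⁻¹ * (τ ^ (l:ℕ) * Real.sqrt τ * Z) := by
          apply mul_le_mul_of_nonneg_left hI (by positivity)
      _ = Real.sqrt τ / τ * Z := by
          rw [pow_succ]
          field_simp
  have hmY : ∀ l : Fin q, ‖m l‖ ≤ Real.sqrt τ / τ * Y :=
    fun l => hm_bound l Y hY0 (weight_bound htn (l:ℕ) hpmem)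
  have hmX : ∀ l : Fin q, ‖m l‖ ≤ Real.sqrt τ / τ * X := by
    intro l
    refine hm_bound l X hX0 ?_
    rw [← hortho (l:ℕ) l.isLt]
    exact weight_bound htn (l:ℕ) hv
  -- bounds on the b k
  have hb_bound : ∀ (k : Fin q) (Z : ℝ), 0 ≤ Z → (∀ l : Fin q, ‖m l‖ ≤ Real.sqrt τ / τ * Z) →
      ‖b k‖ ≤ (∑ l : Fin q, |A⁻¹ k l|) * (Real.sqrt τ / τ * Z) := by
    intro k Z hZ hm
    rw [h_b_eq k]
    refine (norm_sum_le _ _).trans ?_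
    rw [Finset.sum_mul]
    refine Finset.sum_le_sum fun l _ => ?_
    rw [norm_smul, Real.norm_eq_abs]
    exact mul_le_mul_of_nonneg_left (hm l) (abs_nonneg _)
  -- pointwise bound on ‖p s‖
  have hps : ∀ (Z : ℝ), 0 ≤ Z → (∀ l : Fin q, ‖m l‖ ≤ Real.sqrt τ / τ * Z) →
      ‖p s‖ ≤ K * (Real.sqrt τ / τ * Z) := by
    intro Z hZ hm
    calc ‖p s‖ ≤ ∑ j : Fin q, ‖b j‖ := by
          rw [hp s]
          refine (norm_sum_le _ _).trans (Finset.sum_le_sum fun j _ => ?_)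
          rw [hbdef]
          simp only [norm_smul, norm_pow, Real.norm_eq_abs, abs_of_pos hτ]
          apply mul_le_mul_of_nonneg_right _ (norm_nonneg _)
          apply pow_le_pow_left₀ (abs_nonneg _)
          rw [abs_of_pos (sub_pos.2 hs.1)]
          exact sub_le_sub_right hs.2 tn
      _ ≤ ∑ j : Fin q, (∑ l : Fin q, |A⁻¹ j l|) * (Real.sqrt τ / τ * Z) :=
          Finset.sum_le_sum fun j _ => hb_bound j Z hZ hm
      _ = K * (Real.sqrt τ / τ * Z) := by rw [hKdef, Finset.sum_mul]
  have h1 := hps X hX0 hmX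
  have h2 := hps Y hY0 hmY
  have hfin : ‖p s‖ ^ 2 ≤ (K * (Real.sqrt τ / τ * X)) * (K * (Real.sqrt τ / τ * Y)) := by
    rw [sq]
    exact mul_le_mul h1 h2 (norm_nonneg _) (by positivity)
  refine hfin.trans ?_
  have hsq : Real.sqrt τ * Real.sqrt τ = τ := Real.mul_self_sqrt hτ.le
  have hKK : K * K ≤ (K + 1) ^ 2 := by nlinarith
  have hττ : τ / (τ * τ) = 1 / τ := by rw [div_eq_div_iff (by positivity) (by positivity)]; ring
  have hcc : (Real.sqrt τ / τ) * (Real.sqrt τ / τ) = 1 / τ := by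
    rw [div_mul_div_comm, hsq]; exact hττ
  calc (K * (Real.sqrt τ / τ * X)) * (K * (Real.sqrt τ / τ * Y))
      = (K * K) * ((Real.sqrt τ / τ) * (Real.sqrt τ / τ)) * (X * Y) := by ring
    _ = (K * K) * (1 / τ) * (X * Y) := by rw [hcc]
    _ ≤ (K + 1) ^ 2 * (1 / τ) * (X * Y) := by
        apply mul_le_mul_of_nonneg_right _ (by positivity)
        apply mul_le_mul_of_nonneg_right hKK (by positivity)
    _ = (K + 1) ^ 2 / τ * (X * Y) := by ring

/-- **Pointwise bound for the projection `π_n`** (key inequality in Step 2 of the proof of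
Lemma 3.1): there is `C_q > 0` depending only on `q` such that for every `v ∈ L²(J_n; V)`
and every `s ∈ J_n`, `‖(π_n v)(s)‖_U² ≤ (C_q/τ_n) ‖v‖_{L²(J_n;U)} ‖π_n v‖_{L²(J_n;U)}`,
both for `U = V` and `U = H`. The projection `π_n v` is represented by any polynomial `p`
satisfying its characterizing conditions. -/
theorem projection_pointwise_bound (q : ℕ) (hq : 1 ≤ q) :
    ∃ C : ℝ, 0 < C ∧
      ∀ (V : Type u) [NormedAddCommGroup V] [InnerProductSpace ℝ V] [CompleteSpace V]
        (H : Type w) [NormedAddCommGroup H] [InnerProductSpace ℝ H] [CompleteSpace H]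
        (ι : V →L[ℝ] H), Function.Injective ι →
      ∀ tn tn1 : ℝ, tn < tn1 →
      ∀ v : ℝ → V, MemLp v 2 (volume.restrict (Set.Ioc tn tn1)) →
      ∀ p : ℝ → V,
        (∃ c : Fin (q + 1) → V, ∀ x : ℝ, p x = ∑ j : Fin (q + 1), x ^ (j : ℕ) • c j) →
        p tn = 0 →
        (∀ l < q, (∫ x in Set.Ioc tn tn1, (x - tn) ^ l • (v x - p x)) = 0) →
      ∀ s ∈ Set.Ioc tn tn1,
        ‖p s‖ ^ 2 ≤ C / (tn1 - tn) *
            (Real.sqrt (∫ x in Set.Ioc tn tn1, ‖v x‖ ^ 2) *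
              Real.sqrt (∫ x in Set.Ioc tn tn1, ‖p x‖ ^ 2)) ∧
        ‖ι (p s)‖ ^ 2 ≤ C / (tn1 - tn) *
            (Real.sqrt (∫ x in Set.Ioc tn tn1, ‖ι (v x)‖ ^ 2) *
              Real.sqrt (∫ x in Set.Ioc tn tn1, ‖ι (p x)‖ ^ 2)) := by
  obtain ⟨C₁, hC₁pos, hC₁⟩ := key_bound.{u} q
  obtain ⟨C₂, hC₂pos, hC₂⟩ := key_bound.{w} q
  refine ⟨max C₁ C₂, lt_max_of_lt_left hC₁pos, ?_⟩
  intro V _ _ _ H _ _ _ ι _ tn tn1 htn v hv p hrep hp0 hortho s hs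
  have hτ : (0:ℝ) < tn1 - tn := sub_pos.2 htn
  -- rewrite p in shifted form
  obtain ⟨c, hc⟩ := hrep
  obtain ⟨d, hd⟩ := poly_shift q c tn
  have hval : ∀ x : ℝ, p x = ∑ k : Fin (q+1), (x - tn) ^ (k:ℕ) • d k :=
    fun x => (hc x).trans (hd x)
  have hd0 : d 0 = 0 := by
    have h := (hval tn).symm.trans hp0
    rw [Fin.sum_univ_succ] at h
    simpa using h
  have ha : ∀ x : ℝ, p x = ∑ j : Fin q, (x - tn) ^ ((j:ℕ)+1) • (d j.succ) := by
    intro x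
    rw [hval x, Fin.sum_univ_succ, hd0]
    simp [Fin.val_succ]
  have hpcont : Continuous p := by
    have : p = fun x => ∑ j : Fin q, (x - tn) ^ ((j:ℕ)+1) • (d j.succ) := funext ha
    rw [this]; fun_prop
  -- integrability of the weighted functions
  have honehalf : (1:ENNReal)/1 = 1/2 + 1/2 := by rw [one_div_one, ENNReal.add_halves]
  have hIv : ∀ l : ℕ, Integrable (fun x => (x - tn) ^ l • v x)
      (volume.restrict (Set.Ioc tn tn1)) := by
    intro l
    refine memLp_one_iff_integrable.mp ?_
    exact MemLp.smul (q := 2) (r := 1) hv (memLp_of_continuous (f := fun x => (x - tn) ^ l) (by fun_prop) _ _ 2)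
  have hIp : ∀ l : ℕ, Integrable (fun x => (x - tn) ^ l • p x)
      (volume.restrict (Set.Ioc tn tn1)) :=
    fun l => Continuous.integrableOn_Ioc (by fun_prop)
  have horth' : ∀ l, l < q → (∫ x in Set.Ioc tn tn1, (x - tn) ^ l • v x)
      = ∫ x in Set.Ioc tn tn1, (x - tn) ^ l • p x := by
    intro l hl
    have h0 := hortho l hl
    have heq : (fun x => (x - tn) ^ l • (v x - p x))
        = fun x => (x - tn) ^ l • v x - (x - tn) ^ l • p x :=
      funext fun x => smul_sub _ _ _
    rw [heq, integral_sub (hIv l) (hIp l)] at h0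
    exact sub_eq_zero.mp h0
  -- V-side bound
  have hVbound := hC₁ V tn tn1 htn v hv (fun j => d j.succ) p ha horth' s hs
  -- H-side data
  set v' : ℝ → H := fun x => ι (v x) with hv'def
  set p' : ℝ → H := fun x => ι (p x) with hp'def
  have hv' : MemLp v' 2 (volume.restrict (Set.Ioc tn tn1)) :=
    ContinuousLinearMap.comp_memLp' ι hv
  have ha' : ∀ x : ℝ, p' x = ∑ j : Fin q, (x - tn) ^ ((j:ℕ)+1) • (ι (d j.succ)) := by
    intro x
    rw [hp'def]
    simp only [ha x, map_sum, ContinuousLinearMap.map_smul]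
  have horth'' : ∀ l, l < q → (∫ x in Set.Ioc tn tn1, (x - tn) ^ l • v' x)
      = ∫ x in Set.Ioc tn tn1, (x - tn) ^ l • p' x := by
    intro l hl
    have h1 : (∫ x in Set.Ioc tn tn1, (x - tn) ^ l • v' x)
        = ι (∫ x in Set.Ioc tn tn1, (x - tn) ^ l • v x) := by
      rw [← ContinuousLinearMap.integral_comp_comm ι (hIv l)]
      exact integral_congr_ae (Filter.Eventually.of_forall fun x => by
        simp [hv'def, ContinuousLinearMap.map_smul])
    have h2 : (∫ x in Set.Ioc tn tn1, (x - tn) ^ l • p' x)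
        = ι (∫ x in Set.Ioc tn tn1, (x - tn) ^ l • p x) := by
      rw [← ContinuousLinearMap.integral_comp_comm ι (hIp l)]
      exact integral_congr_ae (Filter.Eventually.of_forall fun x => by
        simp [hp'def, ContinuousLinearMap.map_smul])
    rw [h1, h2, horth' l hl]
  have hHbound := hC₂ H tn tn1 htn v' hv' (fun j => ι (d j.succ)) p' ha' horth'' s hs
  have hmono : ∀ c₀ Z : ℝ, c₀ ≤ max C₁ C₂ → 0 ≤ Z →
      c₀ / (tn1 - tn) * Z ≤ max C₁ C₂ / (tn1 - tn) * Z := by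
    intro c₀ Z hc hZ
    gcongr
  refine ⟨hVbound.trans (hmono C₁ _ (le_max_left _ _) (by positivity)),
    hHbound.trans (hmono C₂ _ (le_max_right _ _) (by positivity))⟩
end
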